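/- arXiv:2112.13475 — 3 statements merged into one kernel-verified Lean document; each statement's English description precedes it below -/
import Mathlib

section
/- As j → ∞, | ∫_ℝ ∫_ℝ ∫_ℝ |ψ̂(2^{j₂(j)} λ₁)|² · ψ̂(2^j(λ₁+λ₂)) · ψ̂(2^j(λ₃−λ₁)) · f_G(λ₁) · f_{c,j}(λ₂) · f_{c,j}(λ₃) dλ₁ dλ₂ dλ₃ | = O(2^{−jβ} · 2^{−j₂(j)β}). -/
open MeasureTheory Filter

private lemma aux_int_rpow_exp {p c : ℝ} (hp : -1 < p) (hc : 0 < c) :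
    Integrable (fun x : ℝ => |x| ^ p * Real.exp (-(c * |x|))) := by
  have h0 : IntegrableOn (fun x : ℝ => x ^ p * Real.exp (-(c * x))) (Set.Ioi 0) := by
    have := integrableOn_rpow_mul_exp_neg_mul_rpow hp one_pos hc
    simpa [Real.rpow_one, neg_mul] using this
  have hIoi : IntegrableOn (fun x : ℝ => |x| ^ p * Real.exp (-(c * |x|))) (Set.Ioi 0) := by
    apply h0.congr_fun ?_ measurableSet_Ioi
    intro x hx
    simp only []
    rw [abs_of_pos hx]
  have hIci : IntegrableOn (fun x : ℝ => |x| ^ p * Real.exp (-(c * |x|))) (Set.Ici 0) :=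
    Iff.mpr integrableOn_Ici_iff_integrableOn_Ioi hIoi
  have hIic : IntegrableOn (fun x : ℝ => |x| ^ p * Real.exp (-(c * |x|))) (Set.Iic 0) := by
    have h_map_neg : (volume.restrict (Set.Ici (0:ℝ))).map Neg.neg
        = volume.restrict (Set.Iic (0:ℝ)) := by
      conv => rhs; rw [← Measure.map_neg_eq_self (volume : Measure ℝ),
        measurableEmbedding_neg.restrict_map]
      simp
    rw [IntegrableOn, ← h_map_neg, measurableEmbedding_neg.integrable_map_iff]
    simp [Function.comp_def, abs_neg]
    exact hIci
  rw [← integrableOn_univ, ← Set.Iic_union_Ici (a := (0:ℝ)), integrableOn_union]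
  exact ⟨hIic, hIci⟩

private lemma aux_scale (g : ℝ → ℝ) {a : ℝ} (ha : 0 < a) :
    ∫ x : ℝ, g (a * x) = a⁻¹ * ∫ y : ℝ, g y := by
  rw [MeasureTheory.Measure.integral_comp_mul_left g a, abs_of_pos (inv_pos.mpr ha), smul_eq_mul]

/-- Fourier transform `ψ̂(λ) = ∫ e^{-iλt} ψ(t) dt`. -/
noncomputable def fhat (ψ : ℝ → ℝ) (l : ℝ) : ℂ :=
  ∫ t : ℝ, Complex.exp (-(Complex.I * (l : ℂ) * (t : ℂ))) * (ψ t : ℂ)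

theorem stmt_17
    (β : ℝ) (hβ : β ∈ Set.Ioo (0 : ℝ) 1)
    (C_G : ℝ → ℝ) (hCG_cont : Continuous C_G) (hCG_bdd : ∃ M : ℝ, ∀ x, C_G x ≤ M)
    (hCG_nonneg : ∀ x, 0 ≤ C_G x) (hCG_even : ∀ x, C_G (-x) = C_G x)
    (hCG0 : 0 < C_G 0)
    (f_G : ℝ → ℝ) (hfG_nonneg : ∀ x, 0 ≤ f_G x)
    (hfG : ∀ x : ℝ, x ≠ 0 → f_G x = C_G x * |x| ^ (β - 1))
    (hfG_int : Integrable f_G)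
    (ψ : ℝ → ℝ) (hψ_int : Integrable ψ) (hψ_sq : Integrable (fun t => (ψ t) ^ 2))
    (hψ_zero : (∫ t : ℝ, ψ t) = 0)
    (α K κ : ℝ) (hα : 1 ≤ α) (hK : 0 < K) (hκ : 0 < κ)
    (Cψ : ℝ → ℂ) (hCψ_cont : Continuous Cψ)
    (hCψ0 : 0 < (Cψ 0).re ∧ (Cψ 0).im = 0)
    (hCψ_bdd : ∀ l : ℝ, ‖Cψ l‖ ≤ K * Real.exp (-κ * |l|))
    (hhat : ∀ l : ℝ, fhat ψ l = Cψ l * ((|l| ^ α : ℝ) : ℂ))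
    (sigma2 : ℕ → ℝ)
    (hsigma2 : ∀ j : ℕ, sigma2 j =
      ∫ l : ℝ, f_G l * ‖fhat ψ ((2 : ℝ) ^ j * l)‖ ^ 2)
    (fc : ℕ → ℝ → ℂ)
    (hfc : ∀ j : ℕ, ∀ l : ℝ,
      fc j l = ((((Real.sqrt (sigma2 j))⁻¹ * f_G l : ℝ)) : ℂ) *
        (starRingEnd ℂ) (fhat ψ ((2 : ℝ) ^ j * l)))
    (j₂ : ℕ → ℕ)
    (hj₂ : 1 < Filter.liminf (fun j : ℕ => (j₂ j : ℝ) / (j : ℝ)) atTop) :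
    ∃ Cst > (0 : ℝ), ∃ J : ℕ, ∀ j ≥ J,
      ‖(∫ l₁ : ℝ, ∫ l₂ : ℝ, ∫ l₃ : ℝ,
          ((‖fhat ψ ((2 : ℝ) ^ (j₂ j) * l₁)‖ ^ 2 : ℝ) : ℂ) *
            fhat ψ ((2 : ℝ) ^ j * (l₁ + l₂)) * fhat ψ ((2 : ℝ) ^ j * (l₃ - l₁)) *
            ((f_G l₁ : ℝ) : ℂ) * fc j l₂ * fc j l₃)‖
      ≤ Cst * ((2 : ℝ) ^ (-(j : ℝ) * β) * (2 : ℝ) ^ (-(j₂ j : ℝ) * β)) := by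
  obtain ⟨hβ0, hβ1⟩ := hβ
  obtain ⟨M, hM⟩ := hCG_bdd
  have hM0 : 0 < M := lt_of_lt_of_le hCG0 (hM 0)
  have hα0 : (0:ℝ) < α := lt_of_lt_of_le one_pos hα
  -- continuity of fhat
  have hfhat_cont : Continuous (fhat ψ) := by
    have h1 : fhat ψ = fun l => Cψ l * ((|l| ^ α : ℝ) : ℂ) := funext hhat
    rw [h1]
    exact hCψ_cont.mul (Complex.continuous_ofReal.comp
      (continuous_abs.rpow_const (fun x => Or.inr hα0.le)))
  -- fhat vanishes at 0
  have hfhat0 : fhat ψ 0 = 0 := by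
    rw [hhat 0]
    simp [Real.zero_rpow hα0.ne']
  -- uniform bound on fhat
  set P : ℝ := ∫ t : ℝ, |ψ t| with hPdef
  have hP0 : 0 ≤ P := integral_nonneg (fun t => abs_nonneg _)
  have hP : ∀ l : ℝ, ‖fhat ψ l‖ ≤ P := by
    intro l
    rw [fhat]
    calc ‖∫ t : ℝ, Complex.exp (-(Complex.I * (l : ℂ) * (t : ℂ))) * (ψ t : ℂ)‖
        ≤ ∫ t : ℝ, ‖Complex.exp (-(Complex.I * (l : ℂ) * (t : ℂ))) * (ψ t : ℂ)‖ :=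
          norm_integral_le_integral_norm _
      _ = ∫ t : ℝ, |ψ t| := by
          congr 1; funext t
          rw [norm_mul, Complex.norm_exp]
          simp
      _ = P := rfl
  clear_value P
  -- pointwise decay bound
  have hfb : ∀ l : ℝ, ‖fhat ψ l‖ ≤ K * Real.exp (-(κ * |l|)) * |l| ^ α := by
    intro l
    rw [hhat l, norm_mul, Complex.norm_real, Real.norm_eq_abs, abs_of_nonneg (Real.rpow_nonneg (abs_nonneg l) α)]
    have := hCψ_bdd l
    rw [neg_mul] at this
    exact mul_le_mul_of_nonneg_right this (Real.rpow_nonneg (abs_nonneg l) α)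
  -- integrability of f_G * |fhat (u ·)|^n
  have hGint : ∀ (u : ℝ) (n : ℕ),
      Integrable (fun l => f_G l * ‖fhat ψ (u * l)‖ ^ n) := by
    intro u n
    have hmeas : AEStronglyMeasurable (fun l : ℝ => ‖fhat ψ (u * l)‖ ^ n) volume :=
      ((continuous_norm.comp (hfhat_cont.comp
        (continuous_const.mul continuous_id))).pow n).aestronglyMeasurable
    have hbd : ∀ l : ℝ, ‖‖fhat ψ (u * l)‖ ^ n‖ ≤ P ^ n := by
      intro l
      rw [Real.norm_eq_abs, abs_of_nonneg (pow_nonneg (norm_nonneg _) n)]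
      exact pow_le_pow_left₀ (norm_nonneg _) (hP _) n
    have h := hfG_int.bdd_mul hmeas (Filter.Eventually.of_forall hbd)
    simpa [mul_comm] using h
  -- upper bound with scaling
  have hup : ∀ n : ℕ, 0 < n → ∀ a : ℝ, 0 < a →
      ∫ l : ℝ, f_G l * ‖fhat ψ (a * l)‖ ^ n
        ≤ (M * K ^ n * ∫ μ : ℝ, |μ| ^ (β - 1 + α * n) * Real.exp (-((n : ℝ) * κ * |μ|)))
          * a ^ (-β) := by
    intro n hn a ha
    have hn1 : (1:ℝ) ≤ (n:ℝ) := by exact_mod_cast hn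
    set p : ℝ := β - 1 + α * n with hpdef
    have hp0 : 0 < p := by nlinarith
    have hp : -1 < p := by linarith
    have hcn : 0 < (n:ℝ) * κ := by positivity
    set g : ℝ → ℝ := fun μ => M * K ^ n * (|μ| ^ p * Real.exp (-((n:ℝ) * κ * |μ|))) with hgdef
    have hg_int : Integrable g := (aux_int_rpow_exp hp hcn).const_mul _
    have hcomp : Integrable (fun l => a ^ (1 - β) * g (a * l)) :=
      (hg_int.comp_mul_left' ha.ne').const_mul _
    have hpt : ∀ l : ℝ, f_G l * ‖fhat ψ (a * l)‖ ^ n ≤ a ^ (1 - β) * g (a * l) := by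
      intro l
      rcases eq_or_ne l 0 with rfl | hl
      · simp [g, hfhat0, zero_pow hn.ne', Real.zero_rpow hp0.ne']
      · have hb : 0 < |l| := abs_pos.mpr hl
        have hab : 0 < a * |l| := mul_pos ha hb
        have h1 : f_G l ≤ M * |l| ^ (β - 1) := by
          rw [hfG l hl]
          exact mul_le_mul_of_nonneg_right (hM l) (Real.rpow_nonneg (abs_nonneg l) _)
        have h2 : ‖fhat ψ (a * l)‖ ^ n
            ≤ (K * Real.exp (-(κ * (a * |l|))) * (a * |l|) ^ α) ^ n := by
          apply pow_le_pow_left₀ (norm_nonneg _)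
          have := hfb (a * l)
          rwa [abs_mul, abs_of_pos ha] at this
        have h3 : f_G l * ‖fhat ψ (a * l)‖ ^ n
            ≤ (M * |l| ^ (β - 1)) * (K * Real.exp (-(κ * (a * |l|))) * (a * |l|) ^ α) ^ n := by
          apply mul_le_mul h1 h2 (pow_nonneg (norm_nonneg _) n)
            (mul_nonneg hM0.le (Real.rpow_nonneg (abs_nonneg l) _))
        refine h3.trans_eq ?_
        set b : ℝ := |l|
        have hE : Real.exp (-(κ * (a * b))) ^ n = Real.exp (-((n:ℝ) * κ * (a * b))) := by
          rw [← Real.exp_nat_mul]; congr 1; ring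
        have hZ : ((a * b) ^ α) ^ n = (a * b) ^ (α * (n:ℝ)) := by
          rw [← Real.rpow_natCast ((a * b) ^ α) n, ← Real.rpow_mul hab.le]
        have hsplit : (a * b) ^ (β - 1 + α * (n:ℝ))
            = a ^ (β - 1) * b ^ (β - 1) * (a * b) ^ (α * (n:ℝ)) := by
          rw [Real.rpow_add hab, Real.mul_rpow ha.le hb.le]
        have haa : a ^ (1 - β) * a ^ (β - 1) = 1 := by
          rw [← Real.rpow_add ha]; norm_num
        have habs : |a * l| = a * b := by rw [abs_mul, abs_of_pos ha]
        rw [hgdef]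
        simp only [habs]
        rw [mul_pow, mul_pow, hE, hZ, hpdef, hsplit]
        linear_combination (-(M * K ^ n * (b ^ (β - 1) * ((a * b) ^ (α * (n:ℝ)) *
          Real.exp (-((n:ℝ) * κ * (a * b))))))) * haa
    calc ∫ l : ℝ, f_G l * ‖fhat ψ (a * l)‖ ^ n
        ≤ ∫ l : ℝ, a ^ (1 - β) * g (a * l) :=
          integral_mono_of_nonneg
            (Filter.Eventually.of_forall fun l => mul_nonneg (hfG_nonneg l)
              (pow_nonneg (norm_nonneg _) n))
            hcomp (Filter.Eventually.of_forall hpt)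
      _ = a ^ (1 - β) * ∫ l : ℝ, g (a * l) := integral_const_mul _ _
      _ = a ^ (1 - β) * (a⁻¹ * ∫ μ : ℝ, g μ) := by rw [aux_scale g ha]
      _ = (M * K ^ n * ∫ μ : ℝ, |μ| ^ (β - 1 + α * n) * Real.exp (-((n : ℝ) * κ * |μ|)))
            * a ^ (-β) := by
          rw [hgdef]
          rw [integral_const_mul]
          have haa2 : a ^ (1 - β) * a⁻¹ = a ^ (-β) := by
            rw [← Real.rpow_neg_one a, ← Real.rpow_add ha, show (1:ℝ) - β + -1 = -β by ring]
          calc a ^ (1 - β) * (a⁻¹ * (M * K ^ n * ∫ μ : ℝ, |μ| ^ p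
                * Real.exp (-((n:ℝ) * κ * |μ|))))
              = (a ^ (1 - β) * a⁻¹) * (M * K ^ n * ∫ μ : ℝ, |μ| ^ p
                * Real.exp (-((n:ℝ) * κ * |μ|))) := by ring
            _ = _ := by rw [haa2]; ring
  -- lower bound for sigma2
  have hlow : ∃ c > (0:ℝ), ∃ J₀ : ℕ, ∀ j ≥ J₀, c * ((2:ℝ) ^ j) ^ (-β) ≤ sigma2 j := by
    set c0 : ℝ := (Cψ 0).re with hc0def
    have hc0 : 0 < c0 := hCψ0.1
    have habs0 : c0 ≤ ‖Cψ 0‖ := Complex.re_le_norm _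
    obtain ⟨δ₂, hδ₂0, hball₂⟩ := Metric.isOpen_iff.mp
      (((continuous_norm.comp hCψ_cont).isOpen_preimage _ isOpen_Ioi :
        IsOpen ((fun x => ‖Cψ x‖) ⁻¹' Set.Ioi (c0 / 2)))) 0
      (by simpa using lt_of_lt_of_le (half_lt_self hc0) habs0)
    obtain ⟨δ₁, hδ₁0, hball₁⟩ := Metric.isOpen_iff.mp
      ((hCG_cont.isOpen_preimage _ isOpen_Ioi : IsOpen (C_G ⁻¹' Set.Ioi (C_G 0 / 2)))) 0
      (by simpa using half_lt_self hCG0)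
    set δ : ℝ := δ₂ / 3 with hδdef
    have hδ0 : 0 < δ := by positivity
    clear_value δ
    obtain ⟨J₀, hJ₀⟩ := pow_unbounded_of_one_lt (2 * δ / δ₁) (one_lt_two : (1:ℝ) < 2)
    refine ⟨C_G 0 / 2 * (2 * δ) ^ (β - 1) * (c0 / 2 * δ ^ α) ^ 2 * δ,
      mul_pos (mul_pos (mul_pos (half_pos hCG0) (Real.rpow_pos_of_pos (by linarith) _))
        (pow_pos (mul_pos (half_pos hc0) (Real.rpow_pos_of_pos hδ0 _)) 2)) hδ0, J₀, ?_⟩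
    intro j hj
    set t : ℝ := (2:ℝ) ^ j with htdef
    have ht0 : 0 < t := by rw [htdef]; positivity
    have htJ : (2:ℝ) ^ J₀ ≤ t := pow_le_pow_right₀ (by norm_num) hj
    clear_value t
    have hkey : 2 * δ / t < δ₁ := by
      rw [div_lt_iff₀ ht0]
      calc 2 * δ = (2 * δ / δ₁) * δ₁ := by field_simp
        _ < t * δ₁ := by
            apply mul_lt_mul_of_pos_right _ hδ₁0
            exact lt_of_lt_of_le hJ₀ htJ
        _ = δ₁ * t := mul_comm _ _
    set S : Set ℝ := Set.Icc (δ / t) (2 * δ / t) with hSdef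
    set cS : ℝ := C_G 0 / 2 * (2 * δ / t) ^ (β - 1) * (c0 / 2 * δ ^ α) ^ 2 with hcSdef
    have hSlb : ∀ l ∈ S, cS ≤ f_G l * ‖fhat ψ (t * l)‖ ^ 2 := by
      intro l hl
      obtain ⟨hl1, hl2⟩ := hl
      have hl0 : 0 < l := lt_of_lt_of_le (by positivity) hl1
      have h2 : δ ≤ t * l := by rw [mul_comm]; exact (div_le_iff₀ ht0).mp hl1
      have h3 : t * l ≤ 2 * δ := by rw [mul_comm]; exact (le_div_iff₀ ht0).mp hl2
      have htl0 : 0 < t * l := mul_pos ht0 hl0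
      have hin2 : |t * l| < δ₂ := by
        rw [abs_of_pos htl0]
        calc t * l ≤ 2 * δ := h3
          _ < δ₂ := by rw [hδdef]; linarith
      have hCψl : c0 / 2 < ‖Cψ (t * l)‖ := by
        have hmem : t * l ∈ Metric.ball (0:ℝ) δ₂ := by
          rw [Metric.mem_ball, Real.dist_eq, sub_zero]; exact hin2
        exact hball₂ hmem
      have hCGl : C_G 0 / 2 < C_G l := by
        have hlδ : |l| < δ₁ := by
          rw [abs_of_pos hl0]
          exact lt_of_le_of_lt hl2 hkey
        have hmem : l ∈ Metric.ball (0:ℝ) δ₁ := by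
          rw [Metric.mem_ball, Real.dist_eq, sub_zero]; exact hlδ
        exact hball₁ hmem
      have hψl : c0 / 2 * δ ^ α ≤ ‖fhat ψ (t * l)‖ := by
        rw [hhat, norm_mul, Complex.norm_real, Real.norm_eq_abs,
          abs_of_nonneg (Real.rpow_nonneg (abs_nonneg _) α)]
        have hδa : δ ^ α ≤ |t * l| ^ α := by
          apply Real.rpow_le_rpow hδ0.le _ hα0.le
          rw [abs_of_pos htl0]; exact h2
        exact mul_le_mul hCψl.le hδa (Real.rpow_nonneg hδ0.le α) (norm_nonneg _)
      have hfGl : C_G 0 / 2 * (2 * δ / t) ^ (β - 1) ≤ f_G l := by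
        rw [hfG l hl0.ne']
        have hrp : (2 * δ / t) ^ (β - 1) ≤ |l| ^ (β - 1) := by
          rw [abs_of_pos hl0]
          exact Real.rpow_le_rpow_of_nonpos hl0 hl2 (by linarith)
        exact mul_le_mul hCGl.le hrp
          (Real.rpow_nonneg (le_of_lt (div_pos (by linarith) ht0)) _) (hCG_nonneg l)
      have hb2 : (c0 / 2 * δ ^ α) ^ 2 ≤ ‖fhat ψ (t * l)‖ ^ 2 :=
        pow_le_pow_left₀ (mul_nonneg (by linarith) (Real.rpow_nonneg hδ0.le α)) hψl 2
      exact mul_le_mul hfGl hb2 (sq_nonneg _) (hfG_nonneg l)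
    have hSvol : (volume S).toReal = δ / t := by
      rw [hSdef, Real.volume_Icc, ENNReal.toReal_ofReal
        (by rw [div_sub_div_same]; exact div_nonneg (by linarith) ht0.le)]
      ring
    have hchain : cS * (δ / t) ≤ sigma2 j := by
      calc cS * (δ / t) = cS * (volume S).toReal := by rw [hSvol]
        _ ≤ ∫ l in S, f_G l * ‖fhat ψ (t * l)‖ ^ 2 :=
            by have := setIntegral_ge_of_const_le measurableSet_Icc
                (by exact (measure_Icc_lt_top).ne) hSlb ((hGint t 2).integrableOn)
               rw [smul_eq_mul, mul_comm] at this; exact this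
        _ ≤ ∫ l : ℝ, f_G l * ‖fhat ψ (t * l)‖ ^ 2 :=
            setIntegral_le_integral (hGint t 2)
              (Filter.Eventually.of_forall fun l =>
                mul_nonneg (hfG_nonneg l) (pow_nonneg (norm_nonneg _) 2))
        _ = sigma2 j := by rw [hsigma2 j, htdef]
    refine le_trans (le_of_eq ?_) hchain
    have e1 : (2 * δ / t) ^ (β - 1) = (2 * δ) ^ (β - 1) * t ^ (1 - β) := by
      rw [Real.div_rpow (by positivity) ht0.le, div_eq_mul_inv, ← Real.rpow_neg ht0.le,
        show -(β - 1) = 1 - β by ring]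
    have e2 : t ^ (1 - β) * t⁻¹ = t ^ (-β) := by
      rw [← Real.rpow_neg_one t, ← Real.rpow_add ht0, show (1:ℝ) - β + -1 = -β by ring]
    rw [hcSdef, e1, div_eq_mul_inv δ t]
    linear_combination (-(C_G 0 / 2 * ((2*δ) ^ (β - 1)) * (c0 / 2 * δ ^ α) ^ 2 * δ)) * e2
  -- extract constants
  obtain ⟨C2, hC2⟩ : ∃ C2 : ℝ, ∀ a : ℝ, 0 < a →
      ∫ l : ℝ, f_G l * ‖fhat ψ (a * l)‖ ≤ C2 * a ^ (-β) :=
    ⟨_, fun a ha => by simpa [pow_one] using hup 1 one_pos a ha⟩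
  obtain ⟨C1, hC1⟩ : ∃ C1 : ℝ, ∀ a : ℝ, 0 < a →
      ∫ l : ℝ, f_G l * ‖fhat ψ (a * l)‖ ^ 2 ≤ C1 * a ^ (-β) :=
    ⟨_, fun a ha => hup 2 two_pos a ha⟩
  have hC2nn : 0 ≤ C2 := by
    have h := hC2 1 one_pos
    rw [Real.one_rpow, mul_one] at h
    exact le_trans (integral_nonneg fun l => mul_nonneg (hfG_nonneg l) (norm_nonneg _)) h
  have hC1nn : 0 ≤ C1 := by
    have h := hC1 1 one_pos
    rw [Real.one_rpow, mul_one] at h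
    exact le_trans (integral_nonneg fun l =>
      mul_nonneg (hfG_nonneg l) (pow_nonneg (norm_nonneg _) 2)) h
  obtain ⟨c, hc, J₀, hlow'⟩ := hlow
  refine ⟨P * P * C1 * C2 * C2 * c⁻¹ + 1, ?_, J₀, ?_⟩
  · have : 0 ≤ P * P * C1 * C2 * C2 * c⁻¹ :=
      mul_nonneg (mul_nonneg (mul_nonneg (mul_nonneg (mul_nonneg hP0 hP0) hC1nn) hC2nn)
        hC2nn) (inv_nonneg.mpr hc.le)
    linarith
  intro j hj
  set t : ℝ := (2:ℝ) ^ j with htdef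
  set t2 : ℝ := (2:ℝ) ^ (j₂ j) with ht2def
  have ht0 : 0 < t := by rw [htdef]; positivity
  have ht20 : 0 < t2 := by rw [ht2def]; positivity
  have hσlb : c * t ^ (-β) ≤ sigma2 j := hlow' j hj
  have hσ2ub : sigma2 (j₂ j) ≤ C1 * t2 ^ (-β) := by
    rw [hsigma2 (j₂ j)]
    exact hC1 t2 ht20
  have hσ2nn : 0 ≤ sigma2 (j₂ j) := by
    rw [hsigma2 (j₂ j)]
    exact integral_nonneg fun l =>
      mul_nonneg (hfG_nonneg l) (pow_nonneg (norm_nonneg _) 2)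
  have hA : ∀ l : ℝ, ‖fhat ψ (t2 * l)‖ ^ 2 * f_G l
      = f_G l * ‖fhat ψ ((2:ℝ) ^ (j₂ j) * l)‖ ^ 2 := by
    intro l; rw [← ht2def, mul_comm]
  have hAint : Integrable (fun l => ‖fhat ψ (t2 * l)‖ ^ 2 * f_G l) := by
    have := hGint t2 2
    simpa [mul_comm] using this
  have hIA : ∫ l : ℝ, ‖fhat ψ (t2 * l)‖ ^ 2 * f_G l = sigma2 (j₂ j) := by
    rw [hsigma2 (j₂ j)]
    congr 1; funext l; exact hA l
  -- powers rewriting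
  have hpow1 : (2:ℝ) ^ (-(j : ℝ) * β) = t ^ (-β) := by
    rw [htdef, ← Real.rpow_natCast 2 j, ← Real.rpow_mul (by norm_num : (0:ℝ) ≤ 2),
      show (j:ℝ) * -β = -(j:ℝ) * β by ring]
  have hpow2 : (2:ℝ) ^ (-(j₂ j : ℝ) * β) = t2 ^ (-β) := by
    rw [ht2def, ← Real.rpow_natCast 2 (j₂ j), ← Real.rpow_mul (by norm_num : (0:ℝ) ≤ 2),
      show (j₂ j:ℝ) * -β = -(j₂ j:ℝ) * β by ring]
  rw [hpow1, hpow2]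
  clear_value t t2
  -- sqrt facts
  have hσ0 : 0 < sigma2 j :=
    lt_of_lt_of_le (mul_pos hc (Real.rpow_pos_of_pos ht0 _)) hσlb
  set s : ℝ := Real.sqrt (sigma2 j) with hsdef
  have hs0 : 0 < s := Real.sqrt_pos.mpr hσ0
  have hss : s * s = sigma2 j := Real.mul_self_sqrt hσ0.le
  clear_value s
  -- norm of fc
  have hfcnorm : ∀ l : ℝ, ‖fc j l‖ = s⁻¹ * (f_G l * ‖fhat ψ (t * l)‖) := by
    intro l
    rw [hfc j l, ← hsdef, ← htdef, norm_mul, Complex.norm_real, Real.norm_eq_abs,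
      abs_of_nonneg (mul_nonneg (inv_nonneg.mpr hs0.le) (hfG_nonneg l))]
    rw [Complex.norm_conj, mul_assoc]
  have hfceq : (fun l => ‖fc j l‖) = fun l => s⁻¹ * (f_G l * ‖fhat ψ (t * l)‖) :=
    funext hfcnorm
  have hGint1 : Integrable (fun l => f_G l * ‖fhat ψ (t * l)‖) := by
    simpa [pow_one] using hGint t 1
  have hfcint : Integrable (fun l => ‖fc j l‖) := by
    rw [hfceq]; exact hGint1.const_mul _
  set Tf : ℝ := ∫ l : ℝ, ‖fc j l‖ with hTfdef
  have hTf0 : 0 ≤ Tf := integral_nonneg fun l => norm_nonneg _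
  have hTle : Tf ≤ s⁻¹ * (C2 * t ^ (-β)) := by
    rw [hTfdef, hfceq, integral_const_mul]
    exact mul_le_mul_of_nonneg_left (hC2 t ht0) (inv_nonneg.mpr hs0.le)
  -- the pointwise estimates
  have hΦle : ∀ l₁ l₂ l₃ : ℝ,
      ‖((‖fhat ψ (t2 * l₁)‖ ^ 2 : ℝ) : ℂ) *
        fhat ψ (t * (l₁ + l₂)) * fhat ψ (t * (l₃ - l₁)) *
        ((f_G l₁ : ℝ) : ℂ) * fc j l₂ * fc j l₃‖
      ≤ ((‖fhat ψ (t2 * l₁)‖ ^ 2 * f_G l₁) * (P * P) * ‖fc j l₂‖) * ‖fc j l₃‖ := by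
    intro l₁ l₂ l₃
    rw [norm_mul, norm_mul, norm_mul, norm_mul, norm_mul, Complex.norm_real,
      Complex.norm_real, Real.norm_eq_abs, Real.norm_eq_abs,
      abs_of_nonneg (pow_nonneg (norm_nonneg _) 2), abs_of_nonneg (hfG_nonneg l₁)]
    have h1 : ‖fhat ψ (t * (l₁ + l₂))‖ ≤ P := by exact hP _
    have h2 : ‖fhat ψ (t * (l₃ - l₁))‖ ≤ P := by exact hP _
    calc ‖fhat ψ (t2 * l₁)‖ ^ 2 * ‖fhat ψ (t * (l₁ + l₂))‖ *
          ‖fhat ψ (t * (l₃ - l₁))‖ * f_G l₁ * ‖fc j l₂‖ * ‖fc j l₃‖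
        = (‖fhat ψ (t2 * l₁)‖ ^ 2 * f_G l₁ * ‖fc j l₂‖ * ‖fc j l₃‖) *
          (‖fhat ψ (t * (l₁ + l₂))‖ * ‖fhat ψ (t * (l₃ - l₁))‖) := by ring
      _ ≤ (‖fhat ψ (t2 * l₁)‖ ^ 2 * f_G l₁ * ‖fc j l₂‖ * ‖fc j l₃‖) * (P * P) :=
          mul_le_mul_of_nonneg_left (mul_le_mul h1 h2 (norm_nonneg _) hP0)
            (mul_nonneg (mul_nonneg (mul_nonneg (pow_nonneg (norm_nonneg _) 2)
              (hfG_nonneg l₁)) (norm_nonneg _)) (norm_nonneg _))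
      _ = ((‖fhat ψ (t2 * l₁)‖ ^ 2 * f_G l₁) * (P * P) * ‖fc j l₂‖) * ‖fc j l₃‖ := by
          ring
  have hI3 : ∀ l₁ l₂ : ℝ,
      ‖∫ l₃ : ℝ, ((‖fhat ψ (t2 * l₁)‖ ^ 2 : ℝ) : ℂ) *
        fhat ψ (t * (l₁ + l₂)) * fhat ψ (t * (l₃ - l₁)) *
        ((f_G l₁ : ℝ) : ℂ) * fc j l₂ * fc j l₃‖
      ≤ (‖fhat ψ (t2 * l₁)‖ ^ 2 * f_G l₁) * (P * P) * ‖fc j l₂‖ * Tf := by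
    intro l₁ l₂
    calc ‖∫ l₃ : ℝ, ((‖fhat ψ (t2 * l₁)‖ ^ 2 : ℝ) : ℂ) *
          fhat ψ (t * (l₁ + l₂)) * fhat ψ (t * (l₃ - l₁)) *
          ((f_G l₁ : ℝ) : ℂ) * fc j l₂ * fc j l₃‖
        ≤ ∫ l₃ : ℝ, ‖((‖fhat ψ (t2 * l₁)‖ ^ 2 : ℝ) : ℂ) *
          fhat ψ (t * (l₁ + l₂)) * fhat ψ (t * (l₃ - l₁)) *
          ((f_G l₁ : ℝ) : ℂ) * fc j l₂ * fc j l₃‖ := norm_integral_le_integral_norm _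
      _ ≤ ∫ l₃ : ℝ, ((‖fhat ψ (t2 * l₁)‖ ^ 2 * f_G l₁) * (P * P) * ‖fc j l₂‖)
            * ‖fc j l₃‖ :=
          integral_mono_of_nonneg (Filter.Eventually.of_forall fun _ => norm_nonneg _)
            (hfcint.const_mul _) (Filter.Eventually.of_forall (hΦle l₁ l₂))
      _ = (‖fhat ψ (t2 * l₁)‖ ^ 2 * f_G l₁) * (P * P) * ‖fc j l₂‖ * Tf := by
          rw [integral_const_mul]
  have hI2 : ∀ l₁ : ℝ,
      ‖∫ l₂ : ℝ, ∫ l₃ : ℝ, ((‖fhat ψ (t2 * l₁)‖ ^ 2 : ℝ) : ℂ) *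
        fhat ψ (t * (l₁ + l₂)) * fhat ψ (t * (l₃ - l₁)) *
        ((f_G l₁ : ℝ) : ℂ) * fc j l₂ * fc j l₃‖
      ≤ (‖fhat ψ (t2 * l₁)‖ ^ 2 * f_G l₁) * ((P * P) * Tf * Tf) := by
    intro l₁
    calc ‖∫ l₂ : ℝ, ∫ l₃ : ℝ, ((‖fhat ψ (t2 * l₁)‖ ^ 2 : ℝ) : ℂ) *
          fhat ψ (t * (l₁ + l₂)) * fhat ψ (t * (l₃ - l₁)) *
          ((f_G l₁ : ℝ) : ℂ) * fc j l₂ * fc j l₃‖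
        ≤ ∫ l₂ : ℝ, ‖∫ l₃ : ℝ, ((‖fhat ψ (t2 * l₁)‖ ^ 2 : ℝ) : ℂ) *
          fhat ψ (t * (l₁ + l₂)) * fhat ψ (t * (l₃ - l₁)) *
          ((f_G l₁ : ℝ) : ℂ) * fc j l₂ * fc j l₃‖ := norm_integral_le_integral_norm _
      _ ≤ ∫ l₂ : ℝ, ((‖fhat ψ (t2 * l₁)‖ ^ 2 * f_G l₁) * (P * P) * Tf)
            * ‖fc j l₂‖ :=
          integral_mono_of_nonneg (Filter.Eventually.of_forall fun _ => norm_nonneg _)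
            (hfcint.const_mul _)
            (Filter.Eventually.of_forall fun l₂ =>
              le_trans (hI3 l₁ l₂) (le_of_eq (by ring)))
      _ = (‖fhat ψ (t2 * l₁)‖ ^ 2 * f_G l₁) * ((P * P) * Tf * Tf) := by
          rw [integral_const_mul]; ring
  calc ‖∫ l₁ : ℝ, ∫ l₂ : ℝ, ∫ l₃ : ℝ, ((‖fhat ψ (t2 * l₁)‖ ^ 2 : ℝ) : ℂ) *
        fhat ψ (t * (l₁ + l₂)) * fhat ψ (t * (l₃ - l₁)) *
        ((f_G l₁ : ℝ) : ℂ) * fc j l₂ * fc j l₃‖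
      ≤ ∫ l₁ : ℝ, ‖∫ l₂ : ℝ, ∫ l₃ : ℝ, ((‖fhat ψ (t2 * l₁)‖ ^ 2 : ℝ) : ℂ) *
        fhat ψ (t * (l₁ + l₂)) * fhat ψ (t * (l₃ - l₁)) *
        ((f_G l₁ : ℝ) : ℂ) * fc j l₂ * fc j l₃‖ := norm_integral_le_integral_norm _
    _ ≤ ∫ l₁ : ℝ, (‖fhat ψ (t2 * l₁)‖ ^ 2 * f_G l₁) * ((P * P) * Tf * Tf) :=
        integral_mono_of_nonneg (Filter.Eventually.of_forall fun _ => norm_nonneg _)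
          (hAint.mul_const _) (Filter.Eventually.of_forall hI2)
    _ = sigma2 (j₂ j) * ((P * P) * Tf * Tf) := by rw [integral_mul_const, hIA]
    _ ≤ (C1 * t2 ^ (-β)) * ((P * P) * Tf * Tf) :=
        mul_le_mul_of_nonneg_right hσ2ub
          (mul_nonneg (mul_nonneg (mul_nonneg hP0 hP0) hTf0) hTf0)
    _ ≤ (C1 * t2 ^ (-β)) * ((P * P) * (s⁻¹ * (C2 * t ^ (-β))) * (s⁻¹ * (C2 * t ^ (-β)))) := by
        have hB0 : 0 ≤ s⁻¹ * (C2 * t ^ (-β)) := le_trans hTf0 hTle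
        apply mul_le_mul_of_nonneg_left _ (le_trans hσ2nn hσ2ub)
        calc (P * P) * Tf * Tf ≤ (P * P) * Tf * (s⁻¹ * (C2 * t ^ (-β))) :=
              mul_le_mul_of_nonneg_left hTle (mul_nonneg (mul_nonneg hP0 hP0) hTf0)
          _ ≤ (P * P) * (s⁻¹ * (C2 * t ^ (-β))) * (s⁻¹ * (C2 * t ^ (-β))) :=
              mul_le_mul_of_nonneg_right
                (mul_le_mul_of_nonneg_left hTle (mul_nonneg hP0 hP0)) hB0
    _ ≤ (P * P * C1 * C2 * C2 * c⁻¹ + 1) * (t ^ (-β) * t2 ^ (-β)) := ?_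
  -- final algebra
  have hss' : s⁻¹ * s⁻¹ = (sigma2 j)⁻¹ := by rw [← mul_inv, hss]
  have hinv : (sigma2 j)⁻¹ ≤ c⁻¹ * t ^ β := by
    have h1 : (sigma2 j)⁻¹ ≤ (c * t ^ (-β))⁻¹ :=
      inv_anti₀ (mul_pos hc (Real.rpow_pos_of_pos ht0 _)) hσlb
    rw [mul_inv, ← Real.rpow_neg ht0.le, neg_neg] at h1
    exact h1
  have htt : t ^ β * (t ^ (-β) * t ^ (-β)) = t ^ (-β) := by
    rw [← Real.rpow_add ht0, ← Real.rpow_add ht0, show β + (-β + -β) = -β by ring]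
  calc (C1 * t2 ^ (-β)) * ((P * P) * (s⁻¹ * (C2 * t ^ (-β))) * (s⁻¹ * (C2 * t ^ (-β))))
      = (s⁻¹ * s⁻¹) * ((P * P * C1 * C2 * C2) * (t ^ (-β) * t ^ (-β) * t2 ^ (-β))) := by ring
    _ = (sigma2 j)⁻¹ * ((P * P * C1 * C2 * C2) * (t ^ (-β) * t ^ (-β) * t2 ^ (-β))) := by
        rw [hss']
    _ ≤ (c⁻¹ * t ^ β) * ((P * P * C1 * C2 * C2) * (t ^ (-β) * t ^ (-β) * t2 ^ (-β))) := by
        apply mul_le_mul_of_nonneg_right hinv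
        exact mul_nonneg
          (mul_nonneg (mul_nonneg (mul_nonneg (mul_nonneg hP0 hP0) hC1nn) hC2nn) hC2nn)
          (mul_nonneg (mul_nonneg (Real.rpow_nonneg ht0.le _) (Real.rpow_nonneg ht0.le _))
            (Real.rpow_nonneg ht20.le _))
    _ = (P * P * C1 * C2 * C2 * c⁻¹) * (t ^ (-β) * t2 ^ (-β)) := by
        calc (c⁻¹ * t ^ β) * ((P * P * C1 * C2 * C2) * (t ^ (-β) * t ^ (-β) * t2 ^ (-β)))
            = (t ^ β * (t ^ (-β) * t ^ (-β))) *
              ((P * P * C1 * C2 * C2 * c⁻¹) * t2 ^ (-β)) := by ring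
          _ = _ := by rw [htt]; ring
    _ ≤ (P * P * C1 * C2 * C2 * c⁻¹ + 1) * (t ^ (-β) * t2 ^ (-β)) := by
        apply mul_le_mul_of_nonneg_right (by linarith)
        exact mul_nonneg (Real.rpow_nonneg ht0.le _) (Real.rpow_nonneg ht20.le _)
end

section
/- As j → ∞, | ∫_ℝ ∫_ℝ ∫_ℝ |ψ̂(2^{j₂(j)}(λ₁+λ₂−λ₃))|² · ψ̂(2^j(λ₁+λ₂)) · ψ̂(2^j(λ₃−λ₁)) · f_G(λ₁) · f_{c,j}(λ₂) · f_{c,j}(λ₃) dλ₁ dλ₂ dλ₃ | = O(2^{j(1−2β)} · 2^{−j₂(j)}). -/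
open MeasureTheory Filter

namespace Stmt18

lemma meas_abs_rpow (r : ℝ) (hr : r ≠ 0) : Measurable fun x : ℝ => |x| ^ r := by
  have heq : (fun x : ℝ => |x| ^ r) =
      ({(0:ℝ)} : Set ℝ).piecewise (fun _ => 0) (fun x => Real.exp (Real.log |x| * r)) := by
    funext x
    by_cases hx : x = 0
    · simp [hx, Set.piecewise_eq_of_mem _ _ _ (by simp : (0:ℝ) ∈ ({(0:ℝ)} : Set ℝ)),
        Real.zero_rpow hr]
    · rw [Set.piecewise_eq_of_notMem _ _ _ (by simpa using hx)]
      rw [Real.rpow_def_of_pos (abs_pos.mpr hx)]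
  rw [heq]
  exact Measurable.piecewise (measurableSet_singleton 0) measurable_const
    (Real.measurable_exp.comp ((Real.measurable_log.comp measurable_abs).mul_const r))

lemma exists_sup (p c : ℝ) (hp : 0 < p) (hc : 0 < c) :
    ∃ S : ℝ, 1 ≤ S ∧ ∀ t : ℝ, 0 ≤ t → t ^ p * Real.exp (-(c * t)) ≤ S := by
  have hcont : Continuous fun t : ℝ => t ^ p * Real.exp (-(c * t)) :=
    (Real.continuous_rpow_const hp.le).mul (Real.continuous_exp.comp (by continuity))
  have htend : Tendsto (fun t : ℝ => t ^ p * Real.exp (-(c * t))) atTop (nhds 0) := by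
    simpa [neg_mul] using tendsto_rpow_mul_exp_neg_mul_atTop_nhds_zero p c hc
  obtain ⟨T, hT⟩ := Filter.eventually_atTop.mp (htend.eventually_le_const one_pos)
  obtain ⟨x₀, _, hx₀⟩ := isCompact_Icc.exists_isMaxOn (Set.nonempty_Icc.mpr (le_max_right T 0))
    hcont.continuousOn
  refine ⟨max (x₀ ^ p * Real.exp (-(c * x₀))) 1, le_max_right _ _, fun t ht => ?_⟩
  rcases le_or_gt t (max T 0) with h | h
  · exact le_trans (hx₀ ⟨ht, h⟩) (le_max_left _ _)
  · exact le_trans (hT t (le_trans (le_max_left T 0) h.le)) (le_max_right _ _)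

lemma even_integrable {g : ℝ → ℝ} (hg : ∀ x, g (-x) = g x)
    (h1 : IntegrableOn g (Set.Ioi 0)) : Integrable g := by
  have hind : Integrable ((Set.Ioi (0:ℝ)).indicator g) :=
    (integrable_indicator_iff measurableSet_Ioi).mpr h1
  have hneg : Integrable (fun x => ((Set.Ioi (0:ℝ)).indicator g) (-x)) := by
    have := hind.comp_mul_left' (R := -1) (by norm_num)
    simpa [neg_one_mul] using this
  have heq : (fun x => ((Set.Ioi (0:ℝ)).indicator g) (-x)) = (Set.Iio (0:ℝ)).indicator g := by
    funext x
    by_cases hx : x < 0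
    · rw [Set.indicator_of_mem (Set.mem_Ioi.mpr (by linarith) : -x ∈ Set.Ioi (0:ℝ)),
        Set.indicator_of_mem (Set.mem_Iio.mpr hx), hg]
    · rw [Set.indicator_of_notMem (by simp; linarith),
        Set.indicator_of_notMem (by simpa using hx)]
  rw [heq] at hneg
  have h2 : IntegrableOn g (Set.Iio 0) := (integrable_indicator_iff measurableSet_Iio).mp hneg
  have h3 : IntegrableOn g ({0} : Set ℝ) :=
    (integrableOn_singleton_iff).mpr (Or.inr (by simp))
  have : IntegrableOn g (Set.Iio 0 ∪ {0} ∪ Set.Ioi 0) := (h2.union h3).union h1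
  rwa [Set.Iio_union_right, Set.Iic_union_Ioi, integrableOn_univ] at this

lemma int_exp_abs (c : ℝ) (hc : 0 < c) :
    Integrable (fun x : ℝ => Real.exp (-(c * |x|))) := by
  apply even_integrable (fun x => by rw [abs_neg])
  apply (exp_neg_integrableOn_Ioi 0 hc).congr_fun ?_ measurableSet_Ioi
  intro x hx
  rw [Set.mem_Ioi] at hx
  show Real.exp (-c * x) = Real.exp (-(c * |x|))
  rw [abs_of_pos hx, neg_mul]

lemma int_rpow_exp_abs (r c : ℝ) (hr : -1 < r) (hr0 : r < 0) (hc : 0 < c) :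
    Integrable (fun x : ℝ => |x| ^ r * Real.exp (-(c * |x|))) := by
  apply even_integrable (fun x => by rw [abs_neg])
  have hmeas : AEStronglyMeasurable (fun x : ℝ => |x| ^ r * Real.exp (-(c * |x|))) volume :=
    (((meas_abs_rpow r (by linarith)).mul
      (Real.measurable_exp.comp ((measurable_abs.const_mul c).neg))).aestronglyMeasurable)
  have h01 : IntegrableOn (fun x : ℝ => |x| ^ r * Real.exp (-(c * |x|))) (Set.Ioc 0 1) := by
    have hbase : IntegrableOn (fun x : ℝ => x ^ r) (Set.Ioc 0 1) := by
      have := intervalIntegral.intervalIntegrable_rpow' (a := 0) (b := 1) hr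
      rwa [intervalIntegrable_iff_integrableOn_Ioc_of_le zero_le_one] at this
    apply Integrable.mono' hbase hmeas.restrict
    filter_upwards [ae_restrict_mem measurableSet_Ioc] with x hx
    have hx0 : 0 < x := hx.1
    rw [Real.norm_eq_abs, abs_of_nonneg (by positivity), abs_of_pos hx0]
    exact mul_le_of_le_one_right (by positivity)
      (Real.exp_le_one_iff.mpr (neg_nonpos.mpr (by positivity)))
  have h1i : IntegrableOn (fun x : ℝ => |x| ^ r * Real.exp (-(c * |x|))) (Set.Ioi 1) := by
    have hbase : IntegrableOn (fun x : ℝ => Real.exp (-c * x)) (Set.Ioi 1) :=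
      exp_neg_integrableOn_Ioi 1 hc
    apply Integrable.mono' hbase hmeas.restrict
    filter_upwards [ae_restrict_mem measurableSet_Ioi] with x hx
    rw [Set.mem_Ioi] at hx
    rw [Real.norm_eq_abs, abs_of_nonneg (by positivity), abs_of_pos (by linarith), neg_mul]
    exact mul_le_of_le_one_left (Real.exp_nonneg _)
      (Real.rpow_le_one_of_one_le_of_nonpos (by linarith) hr0.le)
  have := h01.union h1i
  rwa [Set.Ioc_union_Ioi_eq_Ioi zero_le_one] at this



open MeasureTheory Filter


lemma integral_shift (f : ℝ → ℝ) (A : ℝ) :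
    ∫ x : ℝ, f (A - x) = ∫ x : ℝ, f x :=
  integral_sub_left_eq_self f volume A

lemma rpow_exp_scale_eq (r c a : ℝ) (ha : 0 < a) :
    (fun x : ℝ => |x| ^ r * Real.exp (-(c * (a * |x|))))
      = fun x => a ^ (-r) * (|a * x| ^ r * Real.exp (-(c * |a * x|))) := by
  funext x
  rw [abs_mul, abs_of_pos ha, Real.mul_rpow ha.le (abs_nonneg x), Real.rpow_neg ha.le]
  have h1 : (0:ℝ) < a ^ r := Real.rpow_pos_of_pos ha r
  field_simp

lemma int_rpow_exp_abs_scale (r c a : ℝ) (hr : -1 < r) (hr0 : r < 0) (hc : 0 < c) (ha : 0 < a) :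
    Integrable (fun x : ℝ => |x| ^ r * Real.exp (-(c * (a * |x|)))) := by
  rw [rpow_exp_scale_eq r c a ha]
  exact ((int_rpow_exp_abs r c hr hr0 hc).comp_mul_left' ha.ne').const_mul _

lemma integral_rpow_exp_abs_scale (r c a : ℝ) (ha : 0 < a) :
    ∫ x : ℝ, |x| ^ r * Real.exp (-(c * (a * |x|)))
      = a ^ (-(r+1)) * ∫ x : ℝ, |x| ^ r * Real.exp (-(c * |x|)) := by
  rw [rpow_exp_scale_eq r c a ha, integral_const_mul,
    Measure.integral_comp_mul_left (fun y : ℝ => |y| ^ r * Real.exp (-(c * |y|))) a,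
    abs_of_pos (inv_pos.mpr ha), smul_eq_mul, ← mul_assoc]
  congr 1
  rw [← Real.rpow_neg_one a, ← Real.rpow_add ha]
  ring_nf

lemma int_exp_abs_shift_scale (c q A : ℝ) (hc : 0 < c) (hq : 0 < q) :
    Integrable (fun x : ℝ => Real.exp (-(c * (q * |A - x|)))) := by
  have := (int_exp_abs (c*q) (by positivity)).comp_sub_left A
  simpa [mul_assoc] using this

lemma integral_exp_abs_shift_scale (c q A : ℝ) (hc : 0 < c) (hq : 0 < q) :
    ∫ x : ℝ, Real.exp (-(c * (q * |A - x|)))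
      = q⁻¹ * ∫ x : ℝ, Real.exp (-(c * |x|)) := by
  have h1 : (fun x : ℝ => Real.exp (-(c * (q * |A - x|))))
      = fun x => (fun y : ℝ => Real.exp (-(c * (q * |y|)))) (A - x) := by
    funext x; rfl
  rw [h1, integral_shift (fun y : ℝ => Real.exp (-(c * (q * |y|)))) A]
  have h2 : (fun x : ℝ => Real.exp (-(c * (q * |x|))))
      = fun x => (fun y : ℝ => Real.exp (-(c * |y|))) (q * x) := by
    funext x; show _ = Real.exp (-(c * |q * x|)); rw [abs_mul, abs_of_pos hq]
  rw [h2, Measure.integral_comp_mul_left (fun y : ℝ => Real.exp (-(c * |y|))) q,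
    abs_of_pos (inv_pos.mpr hq), smul_eq_mul]


end Stmt18

open MeasureTheory Filter

set_option maxHeartbeats 3000000 in
theorem stmt_18
    (β : ℝ) (hβ : β ∈ Set.Ioo (0 : ℝ) 1)
    (C_G : ℝ → ℝ) (hCG_cont : Continuous C_G) (hCG_bdd : ∃ M : ℝ, ∀ x, C_G x ≤ M)
    (hCG_nonneg : ∀ x, 0 ≤ C_G x) (hCG_even : ∀ x, C_G (-x) = C_G x)
    (hCG0 : 0 < C_G 0)
    (f_G : ℝ → ℝ) (hfG_nonneg : ∀ x, 0 ≤ f_G x)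
    (hfG : ∀ x : ℝ, x ≠ 0 → f_G x = C_G x * |x| ^ (β - 1))
    (hfG_int : Integrable f_G)
    (ψ : ℝ → ℝ) (hψ_int : Integrable ψ) (hψ_sq : Integrable (fun t => (ψ t) ^ 2))
    (hψ_zero : (∫ t : ℝ, ψ t) = 0)
    (α K κ : ℝ) (hα : 1 ≤ α) (hK : 0 < K) (hκ : 0 < κ)
    (Cψ : ℝ → ℂ) (hCψ_cont : Continuous Cψ)
    (hCψ0 : 0 < (Cψ 0).re ∧ (Cψ 0).im = 0)
    (hCψ_bdd : ∀ l : ℝ, ‖Cψ l‖ ≤ K * Real.exp (-κ * |l|))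
    (hhat : ∀ l : ℝ, fhat ψ l = Cψ l * ((|l| ^ α : ℝ) : ℂ))
    (sigma2 : ℕ → ℝ)
    (hsigma2 : ∀ j : ℕ, sigma2 j =
      ∫ l : ℝ, f_G l * ‖fhat ψ ((2 : ℝ) ^ j * l)‖ ^ 2)
    (fc : ℕ → ℝ → ℂ)
    (hfc : ∀ j : ℕ, ∀ l : ℝ,
      fc j l = ((((Real.sqrt (sigma2 j))⁻¹ * f_G l : ℝ)) : ℂ) *
        (starRingEnd ℂ) (fhat ψ ((2 : ℝ) ^ j * l)))
    (j₂ : ℕ → ℕ)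
    (hj₂ : 1 < Filter.liminf (fun j : ℕ => (j₂ j : ℝ) / (j : ℝ)) atTop) :
    ∃ Cst > (0 : ℝ), ∃ J : ℕ, ∀ j ≥ J,
      ‖(∫ l₁ : ℝ, ∫ l₂ : ℝ, ∫ l₃ : ℝ,
          ((‖fhat ψ ((2 : ℝ) ^ (j₂ j) * (l₁ + l₂ - l₃))‖ ^ 2 : ℝ) : ℂ) *
            fhat ψ ((2 : ℝ) ^ j * (l₁ + l₂)) * fhat ψ ((2 : ℝ) ^ j * (l₃ - l₁)) *
            ((f_G l₁ : ℝ) : ℂ) * fc j l₂ * fc j l₃)‖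
      ≤ Cst * ((2 : ℝ) ^ ((j : ℝ) * (1 - 2 * β)) * (2 : ℝ) ^ (-(j₂ j : ℝ))) := by
  obtain ⟨hβ0, hβ1⟩ := hβ
  obtain ⟨M0, hM0⟩ := hCG_bdd
  have hα0 : (0:ℝ) < α := lt_of_lt_of_le one_pos hα
  set M : ℝ := max M0 1 with hMdef
  have hM : ∀ x, C_G x ≤ M := fun x => le_trans (hM0 x) (le_max_left _ _)
  have hMpos : (0:ℝ) < M := lt_of_lt_of_le one_pos (le_max_right _ _)
  have hfGle : ∀ x : ℝ, x ≠ 0 → f_G x ≤ M * |x| ^ (β - 1) := by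
    intro x hx; rw [hfG x hx]
    exact mul_le_mul_of_nonneg_right (hM x) (Real.rpow_nonneg (abs_nonneg x) _)
  have hne0 : ∀ᵐ x : ℝ, x ≠ 0 := by simp [ae_iff]
  -- pointwise description of |fhat|
  have hfhat_eq : ∀ x : ℝ, ‖fhat ψ x‖ = ‖Cψ x‖ * |x| ^ α := by
    intro x
    rw [hhat, norm_mul, Complex.norm_real, Real.norm_eq_abs, abs_of_nonneg (Real.rpow_nonneg (abs_nonneg x) α)]
  have habs : ∀ x : ℝ, ‖fhat ψ x‖ ≤ K * Real.exp (-(κ * |x|)) * |x| ^ α := by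
    intro x
    rw [hfhat_eq x]
    have := hCψ_bdd x
    rw [neg_mul] at this
    exact mul_le_mul_of_nonneg_right this (Real.rpow_nonneg (abs_nonneg x) α)
  obtain ⟨S₁, hS₁1, hS₁⟩ := Stmt18.exists_sup α (κ/2) hα0 (by positivity)
  obtain ⟨S₂, hS₂1, hS₂⟩ := Stmt18.exists_sup (α + (β-1)) κ (by linarith) hκ
  set B' : ℝ := K * S₁ with hB'def
  have hB'pos : 0 < B' := mul_pos hK (lt_of_lt_of_le one_pos hS₁1)
  have hF : ∀ x : ℝ, ‖fhat ψ x‖ ≤ B' * Real.exp (-(κ/2 * |x|)) := by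
    intro x
    refine le_trans (habs x) ?_
    have h1 : |x| ^ α * Real.exp (-(κ/2 * |x|)) ≤ S₁ := hS₁ |x| (abs_nonneg x)
    have h2 : Real.exp (-(κ * |x|)) = Real.exp (-(κ/2 * |x|)) * Real.exp (-(κ/2 * |x|)) := by
      rw [← Real.exp_add]; congr 1; ring
    calc K * Real.exp (-(κ * |x|)) * |x| ^ α
        = K * (|x| ^ α * Real.exp (-(κ/2 * |x|))) * Real.exp (-(κ/2 * |x|)) := by
          rw [h2]; ring
      _ ≤ K * S₁ * Real.exp (-(κ/2 * |x|)) :=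
          mul_le_mul_of_nonneg_right (mul_le_mul_of_nonneg_left h1 hK.le)
            (Real.exp_nonneg _)
      _ = B' * Real.exp (-(κ/2 * |x|)) := by rw [hB'def]
  have hFbd : ∀ x : ℝ, ‖fhat ψ x‖ ≤ B' := by
    intro x
    refine le_trans (hF x) ?_
    nth_rewrite 2 [← mul_one B']
    exact mul_le_mul_of_nonneg_left
      (Real.exp_le_one_iff.mpr (neg_nonpos.mpr (by positivity))) hB'pos.le
  have hFβ : ∀ x : ℝ, ‖fhat ψ x‖ * |x| ^ (β - 1) ≤ K * S₂ := by
    intro x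
    by_cases hx : x = 0
    · rw [hx]
      simp only [abs_zero]
      rw [Real.zero_rpow (by linarith : β - 1 ≠ 0), mul_zero]
      positivity
    · have hxx : (0:ℝ) < |x| := abs_pos.mpr hx
      calc ‖fhat ψ x‖ * |x| ^ (β-1)
          ≤ (K * Real.exp (-(κ * |x|)) * |x| ^ α) * |x| ^ (β-1) :=
            mul_le_mul_of_nonneg_right (habs x) (Real.rpow_nonneg (abs_nonneg x) _)
        _ = K * (|x| ^ (α + (β-1)) * Real.exp (-(κ * |x|))) := by
            rw [Real.rpow_add hxx]; ring
        _ ≤ K * S₂ := mul_le_mul_of_nonneg_left (hS₂ |x| (abs_nonneg x)) hK.le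
  have habsfc : ∀ (jj : ℕ) (l : ℝ), ‖fc jj l‖
      = (Real.sqrt (sigma2 jj))⁻¹ * f_G l * ‖fhat ψ ((2:ℝ) ^ jj * l)‖ := by
    intro jj l
    rw [hfc, norm_mul, Complex.norm_conj, Complex.norm_real, Real.norm_eq_abs,
      abs_of_nonneg (mul_nonneg (inv_nonneg.mpr (Real.sqrt_nonneg _)) (hfG_nonneg l))]
  -- continuity of fhat
  have hfhat_cont : Continuous (fhat ψ) := by
    have h1 : Continuous fun l : ℝ => Cψ l * ((|l| ^ α : ℝ) : ℂ) :=
      hCψ_cont.mul (Complex.continuous_ofReal.comp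
        (continuous_abs.rpow_const (fun x => Or.inr hα0.le)))
    exact h1.congr (fun l => (hhat l).symm)
  -- lower bound on sigma2
  obtain ⟨c₀, hc₀pos, hσ⟩ : ∃ c₀ > (0:ℝ), ∀ j : ℕ, c₀ * ((2:ℝ)^j) ^ (-β) ≤ sigma2 j := by
    have h0 : Cψ 0 ≠ 0 := by
      intro h; rw [h] at hCψ0; simp at hCψ0
    have hCA : 0 < ‖Cψ 0‖ := norm_pos_iff.mpr h0
    obtain ⟨δ1, hδ1pos, hδ1⟩ := Metric.continuousAt_iff.mp
      (continuous_norm.comp hCψ_cont).continuousAt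
      (‖Cψ 0‖/2) (by positivity)
    obtain ⟨δ2, hδ2pos, hδ2⟩ := Metric.continuousAt_iff.mp
      hCG_cont.continuousAt (C_G 0 / 2) (by positivity)
    set s0 : ℝ := min (δ1/2) (δ2/2) with hs0def
    have hs0pos : 0 < s0 := by positivity
    have hCψge : ∀ x : ℝ, |x| ≤ s0 → ‖Cψ 0‖/2 ≤ ‖Cψ x‖ := by
      intro x hx
      have hd : dist x 0 < δ1 := by
        rw [Real.dist_eq, sub_zero]
        have : s0 ≤ δ1/2 := min_le_left _ _
        calc |x| ≤ s0 := hx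
          _ < δ1 := by linarith
      have h2 := hδ1 hd
      rw [Real.dist_eq] at h2
      have h3 := abs_lt.mp h2
      simp only [Function.comp] at h3 ⊢
      linarith [h3.1]
    have hCGge : ∀ x : ℝ, |x| ≤ s0 → C_G 0/2 ≤ C_G x := by
      intro x hx
      have hd : dist x 0 < δ2 := by
        rw [Real.dist_eq, sub_zero]
        have : s0 ≤ δ2/2 := min_le_right _ _
        calc |x| ≤ s0 := hx
          _ < δ2 := by linarith
      have h2 := hδ2 hd
      rw [Real.dist_eq] at h2
      have h3 := abs_lt.mp h2
      linarith [h3.1]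
    refine ⟨(C_G 0/2) * s0 ^ (β-1) * ((‖Cψ 0‖/2 * (s0/2) ^ α)^2) * (s0/2),
      by positivity, ?_⟩
    intro j
    set p : ℝ := (2:ℝ)^j with hpdef
    have hp : 0 < p := by positivity
    have hp1 : 1 ≤ p := one_le_pow₀ (by norm_num)
    have hpinv1 : p⁻¹ ≤ 1 := inv_le_one_of_one_le₀ hp1
    set Sset : Set ℝ := Set.Icc (p⁻¹ * (s0/2)) (p⁻¹ * s0) with hSdef
    set g : ℝ → ℝ := fun l => f_G l * ‖fhat ψ (p * l)‖ ^ 2 with hgdef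
    have hgmeas : AEStronglyMeasurable (fun l : ℝ => ‖fhat ψ (p * l)‖ ^ 2) volume :=
      ((continuous_norm.comp (hfhat_cont.comp (continuous_const.mul continuous_id))).pow
        2).aestronglyMeasurable
    have hgint : Integrable g := by
      have h1 : Integrable (fun l : ℝ => ‖fhat ψ (p * l)‖ ^ 2 * f_G l) :=
        hfG_int.bdd_mul hgmeas (c := B'^2) (ae_of_all _ fun l => by
          rw [Real.norm_eq_abs, abs_of_nonneg (by positivity)]
          exact pow_le_pow_left₀ (norm_nonneg _) (hFbd _) 2)
      exact h1.congr (ae_of_all _ (fun l => by rw [hgdef]; ring))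
    have hglower : ∀ l ∈ Sset, (C_G 0/2) * ((p⁻¹ * s0) ^ (β-1)) *
        ((‖Cψ 0‖/2 * (s0/2) ^ α)^2) ≤ g l := by
      intro l hl
      obtain ⟨hl1, hl2⟩ := hl
      have hl0 : 0 < l := lt_of_lt_of_le (by positivity) hl1
      have hpl_lb : s0/2 ≤ p * l := by
        have := mul_le_mul_of_nonneg_left hl1 hp.le
        rwa [← mul_assoc, mul_inv_cancel₀ hp.ne', one_mul] at this
      have hpl_ub : p * l ≤ s0 := by
        have := mul_le_mul_of_nonneg_left hl2 hp.le
        rwa [← mul_assoc, mul_inv_cancel₀ hp.ne', one_mul] at this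
      have hls0 : |l| ≤ s0 := by
        rw [abs_of_pos hl0]
        calc l ≤ p⁻¹ * s0 := hl2
          _ ≤ 1 * s0 := mul_le_mul_of_nonneg_right hpinv1 hs0pos.le
          _ = s0 := one_mul s0
      have h1 : (C_G 0/2) * ((p⁻¹ * s0) ^ (β-1)) ≤ f_G l := by
        rw [hfG l hl0.ne']
        apply mul_le_mul (hCGge l hls0) ?_ (by positivity) (hCG_nonneg l)
        rw [abs_of_pos hl0]
        exact Real.rpow_le_rpow_of_nonpos hl0 hl2 (by linarith)
      have h2 : (‖Cψ 0‖/2 * (s0/2) ^ α)^2 ≤ ‖fhat ψ (p * l)‖ ^ 2 := by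
        apply pow_le_pow_left₀ (by positivity)
        rw [hfhat_eq]
        have hpls0 : |p * l| ≤ s0 := by
          rw [abs_of_pos (by positivity : 0 < p * l)]; exact hpl_ub
        apply mul_le_mul (hCψge _ hpls0) ?_ (by positivity) (norm_nonneg _)
        rw [abs_of_pos (by positivity : 0 < p * l)]
        exact Real.rpow_le_rpow (by positivity) hpl_lb hα0.le
      calc (C_G 0/2) * ((p⁻¹ * s0) ^ (β-1)) * ((‖Cψ 0‖/2 * (s0/2) ^ α)^2)
          ≤ f_G l * ‖fhat ψ (p * l)‖ ^ 2 :=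
            mul_le_mul h1 h2 (by positivity) (hfG_nonneg l)
        _ = g l := rfl
    have hvol : (volume Sset).toReal = p⁻¹ * (s0/2) := by
      rw [hSdef, Real.volume_Icc, ENNReal.toReal_ofReal (by nlinarith [inv_pos.mpr hp])]
      ring
    have hstep1 : (C_G 0/2) * ((p⁻¹ * s0) ^ (β-1)) *
        ((‖Cψ 0‖/2 * (s0/2) ^ α)^2) * ((volume Sset).toReal) ≤ sigma2 j := by
      rw [hsigma2 j]
      calc (C_G 0/2) * ((p⁻¹ * s0) ^ (β-1)) * ((‖Cψ 0‖/2 * (s0/2) ^ α)^2) *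
            ((volume Sset).toReal)
          ≤ ∫ l in Sset, g l := by
            have h := setIntegral_ge_of_const_le measurableSet_Icc
              (by exact (measure_Icc_lt_top).ne) hglower hgint.integrableOn
            rw [smul_eq_mul, mul_comm] at h; exact h
        _ ≤ ∫ l, g l := setIntegral_le_integral hgint
            (ae_of_all _ (fun l => mul_nonneg (hfG_nonneg l) (by positivity)))
        _ = ∫ l, f_G l * ‖fhat ψ ((2:ℝ)^j * l)‖ ^ 2 := by rw [hgdef, hpdef]
    refine le_trans (le_of_eq ?_) hstep1
    rw [hvol]
    have hrw1 : (p⁻¹ * s0) ^ (β-1) = p ^ (1-β) * s0 ^ (β-1) := by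
      rw [Real.mul_rpow (by positivity) hs0pos.le]
      congr 1
      rw [← Real.rpow_neg_one p, ← Real.rpow_mul hp.le]
      congr 1; ring
    have hrw2 : p ^ (1-β) * p⁻¹ = p ^ (-β) := by
      rw [← Real.rpow_neg_one p, ← Real.rpow_add hp]
      congr 1; ring
    rw [hrw1]
    calc (C_G 0/2) * s0 ^ (β-1) * ((‖Cψ 0‖/2 * (s0/2) ^ α)^2) * (s0/2) * p ^ (-β)
        = (C_G 0/2) * (s0 ^ (β-1)) * ((‖Cψ 0‖/2 * (s0/2) ^ α)^2) * (s0/2) *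
          (p ^ (1-β) * p⁻¹) := by rw [hrw2]
      _ = (C_G 0/2) * (p ^ (1-β) * s0 ^ (β-1)) * ((‖Cψ 0‖/2 * (s0/2) ^ α)^2) *
          (p⁻¹ * (s0/2)) := by ring

  -- constants
  set Ψv : ℝ := ∫ x : ℝ, Real.exp (-(κ * |x|)) with hΨdef
  set Φv : ℝ := ∫ x : ℝ, |x| ^ (β-1) * Real.exp (-(κ/4 * |x|)) with hΦdef
  have hΨ0 : 0 ≤ Ψv := by rw [hΨdef]; exact integral_nonneg fun x => Real.exp_nonneg _
  have hΦ0 : 0 ≤ Φv := integral_nonneg fun x => by positivity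
  have hKS₂ : (0:ℝ) ≤ K * S₂ := mul_nonneg hK.le (by linarith)
  have hE0 : (0:ℝ) ≤ B'^5 * M^3 * (K*S₂) * Ψv * Φv^2 * c₀⁻¹ :=
    mul_nonneg (mul_nonneg (mul_nonneg (mul_nonneg (mul_nonneg
      (pow_nonneg hB'pos.le 5) (pow_nonneg hMpos.le 3)) hKS₂) hΨ0)
      (pow_nonneg hΦ0 2)) (inv_nonneg.mpr hc₀pos.le)
  refine ⟨B'^5 * M^3 * (K*S₂) * Ψv * Φv^2 * c₀⁻¹ + 1, by linarith, 0, fun j _ => ?_⟩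
  set p : ℝ := (2:ℝ)^j with hpdef
  set q : ℝ := (2:ℝ)^(j₂ j) with hqdef
  have hp : 0 < p := by rw [hpdef]; positivity
  have hq : 0 < q := by rw [hqdef]; positivity
  set si : ℝ := (Real.sqrt (sigma2 j))⁻¹ with hsidef
  have hsi0 : 0 ≤ si := by rw [hsidef]; exact inv_nonneg.mpr (Real.sqrt_nonneg _)
  have hσj : c₀ * p ^ (-β) ≤ sigma2 j := hσ j
  have hσpos : 0 < sigma2 j :=
    lt_of_lt_of_le (mul_pos hc₀pos (Real.rpow_pos_of_pos hp _)) hσj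
  have hsisi : si * si ≤ c₀⁻¹ * p ^ β := by
    have h1 : si * si = (sigma2 j)⁻¹ := by
      rw [hsidef, ← mul_inv, Real.mul_self_sqrt hσpos.le]
    rw [h1]
    have h2 : (sigma2 j)⁻¹ ≤ (c₀ * p ^ (-β))⁻¹ :=
      inv_anti₀ (mul_pos hc₀pos (Real.rpow_pos_of_pos hp _)) hσj
    refine le_trans h2 (le_of_eq ?_)
    rw [mul_inv, ← Real.rpow_neg hp.le, neg_neg]
  have habsp : ∀ x : ℝ, |p * x| = p * |x| := fun x => by rw [abs_mul, abs_of_pos hp]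
  have habsq : ∀ x : ℝ, |q * x| = q * |x| := fun x => by rw [abs_mul, abs_of_pos hq]
  have hprpow : ∀ x : ℝ, (0:ℝ) ≤ p ^ x := fun x => Real.rpow_nonneg hp.le x
  have hTj : ∀ x : ℝ, |x| ^ (β-1) = p ^ (1-β) * (p * |x|) ^ (β-1) := by
    intro x
    rw [Real.mul_rpow hp.le (abs_nonneg x), ← mul_assoc]
    nth_rewrite 1 [show (1:ℝ)-β = -(β-1) by ring]
    rw [Real.rpow_neg hp.le, inv_mul_cancel₀ (ne_of_gt (Real.rpow_pos_of_pos hp _)), one_mul]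
  set D₃ : ℝ := (B'^2 * (B' * (si * (M * (p ^ (1-β) * (K * S₂)))))) * (q⁻¹ * Ψv) with hD₃def
  have hD₃0 : 0 ≤ D₃ := by
    rw [hD₃def]
    exact mul_nonneg (mul_nonneg (pow_nonneg hB'pos.le 2) (mul_nonneg hB'pos.le
      (mul_nonneg hsi0 (mul_nonneg hMpos.le (mul_nonneg (hprpow _) hKS₂)))))
      (mul_nonneg (inv_nonneg.mpr hq.le) hΨ0)
  -- level 3
  have key3 : ∀ l₁ l₂ : ℝ,
      ‖∫ l₃ : ℝ,
        ((‖fhat ψ (q * (l₁ + l₂ - l₃))‖ ^ 2 : ℝ) : ℂ) *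
          fhat ψ (p * (l₁ + l₂)) * fhat ψ (p * (l₃ - l₁)) *
          ((f_G l₁ : ℝ) : ℂ) * fc j l₂ * fc j l₃‖
      ≤ D₃ * (‖fhat ψ (p * (l₁ + l₂))‖ * (f_G l₁ * ‖fc j l₂‖)) := by
    intro l₁ l₂
    have hsplit : (fun l₃ : ℝ =>
        ((‖fhat ψ (q * (l₁ + l₂ - l₃))‖ ^ 2 : ℝ) : ℂ) *
          fhat ψ (p * (l₁ + l₂)) * fhat ψ (p * (l₃ - l₁)) *
          ((f_G l₁ : ℝ) : ℂ) * fc j l₂ * fc j l₃)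
        = fun l₃ : ℝ =>
          (((‖fhat ψ (q * (l₁ + l₂ - l₃))‖ ^ 2 : ℝ) : ℂ) *
            fhat ψ (p * (l₃ - l₁)) * fc j l₃) *
          (fhat ψ (p * (l₁ + l₂)) * ((f_G l₁ : ℝ) : ℂ) * fc j l₂) := by
      funext l₃; ring
    rw [hsplit, integral_mul_const, norm_mul]
    have hR : ‖fhat ψ (p * (l₁+l₂)) * ((f_G l₁ : ℝ):ℂ) * fc j l₂‖
        = ‖fhat ψ (p * (l₁+l₂))‖ * (f_G l₁ * ‖fc j l₂‖) := by
      rw [norm_mul, norm_mul, Complex.norm_real, Real.norm_eq_abs, abs_of_nonneg (hfG_nonneg l₁), mul_assoc]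
    rw [hR]
    apply mul_le_mul_of_nonneg_right ?_
      (mul_nonneg (norm_nonneg _) (mul_nonneg (hfG_nonneg l₁) (norm_nonneg _)))
    have hdom : Integrable (fun l₃ : ℝ =>
        Real.exp (-(κ * (q * |l₁ + l₂ - l₃|))) *
          (B'^2 * (B' * (si * (M * (p ^ (1-β) * (K * S₂))))))) :=
      (Stmt18.int_exp_abs_shift_scale κ q (l₁+l₂) hκ hq).mul_const _
    refine le_trans (norm_integral_le_of_norm_le hdom ?_) (le_of_eq ?_)
    · filter_upwards [hne0] with l₃ hl₃
      rw [norm_mul, norm_mul, Complex.norm_real, Real.norm_eq_abs,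
        abs_of_nonneg (by positivity), habsfc]
      have b1 : ‖fhat ψ (q * (l₁+l₂-l₃))‖ ^ 2
          ≤ B'^2 * Real.exp (-(κ * (q * |l₁+l₂-l₃|))) := by
        have h2 := pow_le_pow_left₀ (norm_nonneg _) (hF (q * (l₁+l₂-l₃))) 2
        refine le_trans h2 (le_of_eq ?_)
        rw [mul_pow, pow_two (Real.exp _), ← Real.exp_add, habsq]
        congr 1; ring
      have b2 : ‖fhat ψ (p * (l₃ - l₁))‖ ≤ B' := hFbd _
      have b3 : si * f_G l₃ * ‖fhat ψ (p * l₃)‖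
          ≤ si * (M * (p ^ (1-β) * (K * S₂))) := by
        rw [mul_assoc]
        apply mul_le_mul_of_nonneg_left ?_ hsi0
        calc f_G l₃ * ‖fhat ψ (p * l₃)‖
            ≤ (M * |l₃| ^ (β-1)) * ‖fhat ψ (p * l₃)‖ :=
              mul_le_mul_of_nonneg_right (hfGle l₃ hl₃) (norm_nonneg _)
          _ = M * (p ^ (1-β) * (‖fhat ψ (p * l₃)‖ * |p * l₃| ^ (β-1))) := by
              rw [hTj l₃, habsp]; ring
          _ ≤ M * (p ^ (1-β) * (K * S₂)) := by
              apply mul_le_mul_of_nonneg_left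
                (mul_le_mul_of_nonneg_left (hFβ (p * l₃)) (hprpow _)) hMpos.le
      calc ‖fhat ψ (q * (l₁+l₂-l₃))‖ ^ 2 * ‖fhat ψ (p * (l₃-l₁))‖ *
            (si * f_G l₃ * ‖fhat ψ (p * l₃)‖)
          ≤ (B'^2 * Real.exp (-(κ * (q * |l₁+l₂-l₃|)))) * B' *
            (si * (M * (p ^ (1-β) * (K * S₂)))) :=
            mul_le_mul (mul_le_mul b1 b2 (norm_nonneg _)
                (mul_nonneg (pow_nonneg hB'pos.le 2) (Real.exp_nonneg _))) b3
              (mul_nonneg (mul_nonneg hsi0 (hfG_nonneg _)) (norm_nonneg _))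
              (mul_nonneg (mul_nonneg (pow_nonneg hB'pos.le 2) (Real.exp_nonneg _)) hB'pos.le)
        _ = Real.exp (-(κ * (q * |l₁+l₂-l₃|))) *
            (B'^2 * (B' * (si * (M * (p ^ (1-β) * (K * S₂)))))) := by ring
    · rw [integral_mul_const, Stmt18.integral_exp_abs_shift_scale κ q (l₁+l₂) hκ hq,
        ← hΨdef, hD₃def]
      ring
  -- level 2
  have key2 : ∀ l₁ : ℝ,
      ‖∫ l₂ : ℝ, ∫ l₃ : ℝ,
        ((‖fhat ψ (q * (l₁ + l₂ - l₃))‖ ^ 2 : ℝ) : ℂ) *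
          fhat ψ (p * (l₁ + l₂)) * fhat ψ (p * (l₃ - l₁)) *
          ((f_G l₁ : ℝ) : ℂ) * fc j l₂ * fc j l₃‖
      ≤ (D₃ * (f_G l₁ * (si * (M * (B'^2 * Real.exp (-(κ/4 * (p * |l₁|)))))))) *
          (p ^ (-β) * Φv) := by
    intro l₁
    have hdom : Integrable (fun l₂ : ℝ =>
        (|l₂| ^ (β-1) * Real.exp (-(κ/4 * (p * |l₂|)))) *
        (D₃ * (f_G l₁ * (si * (M * (B'^2 * Real.exp (-(κ/4 * (p * |l₁|))))))))) :=
      (Stmt18.int_rpow_exp_abs_scale (β-1) (κ/4) p (by linarith) (by linarith)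
        (by linarith) hp).mul_const _
    refine le_trans (norm_integral_le_of_norm_le hdom ?_) (le_of_eq ?_)
    · filter_upwards [hne0] with l₂ hl₂
      refine le_trans (key3 l₁ l₂) ?_
      rw [habsfc j l₂]
      have hee : ‖fhat ψ (p * (l₁+l₂))‖ * ‖fhat ψ (p * l₂)‖
          ≤ B'^2 * (Real.exp (-(κ/4 * (p * |l₁|))) * Real.exp (-(κ/4 * (p * |l₂|)))) := by
        refine le_trans (mul_le_mul (hF _) (hF _) (norm_nonneg _)
          (mul_nonneg hB'pos.le (Real.exp_nonneg _))) ?_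
        rw [habsp, habsp]
        calc (B' * Real.exp (-(κ/2 * (p * |l₁+l₂|)))) * (B' * Real.exp (-(κ/2 * (p * |l₂|))))
            = B'^2 * (Real.exp (-(κ/2 * (p * |l₁+l₂|)) + -(κ/2 * (p * |l₂|)))) := by
              rw [Real.exp_add]; ring
          _ ≤ B'^2 * (Real.exp (-(κ/4 * (p * |l₁|)) + -(κ/4 * (p * |l₂|)))) := by
              apply mul_le_mul_of_nonneg_left (Real.exp_le_exp.mpr ?_)
                (pow_nonneg hB'pos.le 2)
              have habs1 : |l₁| ≤ |l₁+l₂| + |l₂| := by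
                calc |l₁| = |(l₁+l₂) + (-l₂)| := by ring_nf
                  _ ≤ |l₁+l₂| + |(-l₂)| := abs_add_le _ _
                  _ = |l₁+l₂| + |l₂| := by rw [abs_neg]
              have h4 : (0:ℝ) ≤ κ/4 * p := by
                apply mul_nonneg (by linarith) hp.le
              nlinarith [mul_le_mul_of_nonneg_left habs1 h4,
                mul_nonneg h4 (abs_nonneg (l₁+l₂)), mul_nonneg h4 (abs_nonneg l₂)]
          _ = B'^2 * (Real.exp (-(κ/4 * (p * |l₁|))) * Real.exp (-(κ/4 * (p * |l₂|)))) := by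
              rw [Real.exp_add]
      calc D₃ * (‖fhat ψ (p * (l₁+l₂))‖ *
              (f_G l₁ * (si * f_G l₂ * ‖fhat ψ (p * l₂)‖)))
          ≤ D₃ * (‖fhat ψ (p * (l₁+l₂))‖ *
              (f_G l₁ * (si * (M * |l₂| ^ (β-1)) * ‖fhat ψ (p * l₂)‖))) := by
            apply mul_le_mul_of_nonneg_left ?_ hD₃0
            apply mul_le_mul_of_nonneg_left ?_ (norm_nonneg _)
            apply mul_le_mul_of_nonneg_left ?_ (hfG_nonneg l₁)
            apply mul_le_mul_of_nonneg_right ?_ (norm_nonneg _)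
            exact mul_le_mul_of_nonneg_left (hfGle l₂ hl₂) hsi0
        _ = (‖fhat ψ (p * (l₁+l₂))‖ * ‖fhat ψ (p * l₂)‖) *
            (D₃ * (f_G l₁ * (si * (M * |l₂| ^ (β-1))))) := by ring
        _ ≤ (B'^2 * (Real.exp (-(κ/4 * (p * |l₁|))) * Real.exp (-(κ/4 * (p * |l₂|))))) *
            (D₃ * (f_G l₁ * (si * (M * |l₂| ^ (β-1))))) := by
            apply mul_le_mul_of_nonneg_right hee
            exact mul_nonneg hD₃0 (mul_nonneg (hfG_nonneg l₁) (mul_nonneg hsi0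
              (mul_nonneg hMpos.le (Real.rpow_nonneg (abs_nonneg l₂) _))))
        _ = (|l₂| ^ (β-1) * Real.exp (-(κ/4 * (p * |l₂|)))) *
            (D₃ * (f_G l₁ * (si * (M * (B'^2 * Real.exp (-(κ/4 * (p * |l₁|)))))))) := by ring
    · rw [integral_mul_const, Stmt18.integral_rpow_exp_abs_scale (β-1) (κ/4) p hp,
        show -(β-1+1) = -β by ring, ← hΦdef]
      ring
  -- level 1 and conclusion
  have hdom1 : Integrable (fun l₁ : ℝ =>
      (|l₁| ^ (β-1) * Real.exp (-(κ/4 * (p * |l₁|)))) *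
      ((D₃ * (si * (M * (M * B'^2)))) * (p ^ (-β) * Φv))) :=
    (Stmt18.int_rpow_exp_abs_scale (β-1) (κ/4) p (by linarith) (by linarith)
      (by linarith) hp).mul_const _
  refine le_trans (norm_integral_le_of_norm_le hdom1 ?_) ?_
  · filter_upwards [hne0] with l₁ hl₁
    refine le_trans (key2 l₁) ?_
    have hY : (0:ℝ) ≤ si * (M * (B'^2 * Real.exp (-(κ/4 * (p * |l₁|))))) :=
      mul_nonneg hsi0 (mul_nonneg hMpos.le (mul_nonneg (pow_nonneg hB'pos.le 2)
        (Real.exp_nonneg _)))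
    calc (D₃ * (f_G l₁ * (si * (M * (B'^2 * Real.exp (-(κ/4 * (p * |l₁|)))))))) *
            (p ^ (-β) * Φv)
        ≤ (D₃ * ((M * |l₁| ^ (β-1)) * (si * (M * (B'^2 * Real.exp (-(κ/4 * (p * |l₁|)))))))) *
            (p ^ (-β) * Φv) := by
          apply mul_le_mul_of_nonneg_right ?_ (mul_nonneg (hprpow _) hΦ0)
          apply mul_le_mul_of_nonneg_left ?_ hD₃0
          exact mul_le_mul_of_nonneg_right (hfGle l₁ hl₁) hY
      _ = (|l₁| ^ (β-1) * Real.exp (-(κ/4 * (p * |l₁|)))) *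
          ((D₃ * (si * (M * (M * B'^2)))) * (p ^ (-β) * Φv)) := by ring
  · rw [integral_mul_const, Stmt18.integral_rpow_exp_abs_scale (β-1) (κ/4) p hp,
      show -(β-1+1) = -β by ring, ← hΦdef]
    have hq2 : q⁻¹ = (2:ℝ) ^ (-(j₂ j : ℝ)) := by
      rw [hqdef, ← Real.rpow_natCast (2:ℝ) (j₂ j), ← Real.rpow_neg (by norm_num : (0:ℝ) ≤ 2)]
    have hp2 : ∀ x : ℝ, p ^ x = (2:ℝ) ^ ((j:ℝ) * x) := by
      intro x
      rw [hpdef, ← Real.rpow_natCast (2:ℝ) j, ← Real.rpow_mul (by norm_num : (0:ℝ) ≤ 2)]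
    have hE5 : (0:ℝ) ≤ B'^5 * M^3 * (K*S₂) * Ψv * Φv^2 :=
      mul_nonneg (mul_nonneg (mul_nonneg (mul_nonneg (pow_nonneg hB'pos.le 5)
        (pow_nonneg hMpos.le 3)) hKS₂) hΨ0) (pow_nonneg hΦ0 2)
    calc (p ^ (-β) * Φv) * ((D₃ * (si * (M * (M * B'^2)))) * (p ^ (-β) * Φv))
        = (si * si) * ((B'^5 * M^3 * (K*S₂) * Ψv * Φv^2) *
            ((p ^ (1-β) * (p ^ (-β) * p ^ (-β))) * q⁻¹)) := by
          rw [hD₃def]; ring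
      _ ≤ (c₀⁻¹ * p ^ β) * ((B'^5 * M^3 * (K*S₂) * Ψv * Φv^2) *
            ((p ^ (1-β) * (p ^ (-β) * p ^ (-β))) * q⁻¹)) := by
          apply mul_le_mul_of_nonneg_right hsisi
          exact mul_nonneg hE5 (mul_nonneg (mul_nonneg (hprpow _)
            (mul_nonneg (hprpow _) (hprpow _))) (inv_nonneg.mpr hq.le))
      _ = (B'^5 * M^3 * (K*S₂) * Ψv * Φv^2 * c₀⁻¹) *
            ((p ^ β * (p ^ (1-β) * (p ^ (-β) * p ^ (-β)))) * q⁻¹) := by ring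
      _ = (B'^5 * M^3 * (K*S₂) * Ψv * Φv^2 * c₀⁻¹) *
            ((2:ℝ) ^ ((j:ℝ) * (1 - 2*β)) * (2:ℝ) ^ (-(j₂ j : ℝ))) := by
          rw [← Real.rpow_add hp, ← Real.rpow_add hp, ← Real.rpow_add hp, hq2,
            show β + (1-β + (-β + -β)) = 1-2*β from by ring, hp2]
      _ ≤ (B'^5 * M^3 * (K*S₂) * Ψv * Φv^2 * c₀⁻¹ + 1) *
            ((2:ℝ) ^ ((j:ℝ) * (1 - 2*β)) * (2:ℝ) ^ (-(j₂ j : ℝ))) := by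
          apply mul_le_mul_of_nonneg_right (by linarith) (by positivity)
end

section
/- As j → ∞, | ∫_ℝ ∫_ℝ |ψ̂(2^{j₂(j)} λ₂)|² · ψ̂(2^j λ₁) · ψ̂(2^j(λ₁−λ₂)) · (f_{c,j})^{⋆2}(λ₁) · (f_{c,j})^{⋆2}(λ₁−λ₂) dλ₂ dλ₁ | = O(2^{j(1−2β)} · 2^{−j₂(j)}), where (f_{c,j})^{⋆2} = f_{c,j} ⋆ f_{c,j} is the (two-fold) convolution of the complex-valued function f_{c,j} with itself. -/
open MeasureTheory Filter

/-- Convolution of two complex-valued functions on ℝ. -/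
noncomputable def convC (f g : ℝ → ℂ) (x : ℝ) : ℂ := ∫ y : ℝ, f (x - y) * g y

private lemma integrable_comp_abs19 {f : ℝ → ℝ} (hf : MeasureTheory.IntegrableOn f (Set.Ioi 0)) :
    MeasureTheory.Integrable (fun x => f |x|) := by
  have hf' : MeasureTheory.IntegrableOn (fun x => f |x|) (Set.Ioi 0) := by
    apply hf.congr_fun (fun x hx => ?_) measurableSet_Ioi
    rw [abs_of_pos hx]
  have int_Iic : MeasureTheory.IntegrableOn (fun x ↦ f |x|) (Set.Iic 0) := by
    rw [← MeasureTheory.Measure.map_neg_eq_self (MeasureTheory.volume : MeasureTheory.Measure ℝ)]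
    have m : MeasurableEmbedding fun x : ℝ => -x := (Homeomorph.neg ℝ).measurableEmbedding
    rw [m.integrableOn_map_iff]
    simp_rw [Function.comp_def, abs_neg, Set.neg_preimage, Set.neg_Iic, neg_zero]
    exact (integrableOn_Ici_iff_integrableOn_Ioi).mpr hf'
  have h := int_Iic.union hf'
  rwa [Set.Iic_union_Ioi, MeasureTheory.integrableOn_univ] at h

private lemma gin19 {s c : ℝ} (hs : -1 < s) (hc : 0 < c) :
    MeasureTheory.Integrable (fun x : ℝ => |x| ^ s * Real.exp (-c * |x|)) := by
  have h1 : MeasureTheory.IntegrableOn (fun x : ℝ => x ^ s * Real.exp (-c * x)) (Set.Ioi 0) := by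
    have := integrableOn_rpow_mul_exp_neg_mul_rpow hs zero_lt_one hc
    simpa [Real.rpow_one] using this
  exact integrable_comp_abs19 h1

set_option maxHeartbeats 2000000 in
theorem stmt_19
    (β : ℝ) (hβ : β ∈ Set.Ioo (0 : ℝ) 1)
    (C_G : ℝ → ℝ) (hCG_cont : Continuous C_G) (hCG_bdd : ∃ M : ℝ, ∀ x, C_G x ≤ M)
    (hCG_nonneg : ∀ x, 0 ≤ C_G x) (hCG_even : ∀ x, C_G (-x) = C_G x)
    (hCG0 : 0 < C_G 0)
    (f_G : ℝ → ℝ) (hfG_nonneg : ∀ x, 0 ≤ f_G x)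
    (hfG : ∀ x : ℝ, x ≠ 0 → f_G x = C_G x * |x| ^ (β - 1))
    (hfG_int : Integrable f_G)
    (ψ : ℝ → ℝ) (hψ_int : Integrable ψ) (hψ_sq : Integrable (fun t => (ψ t) ^ 2))
    (hψ_zero : (∫ t : ℝ, ψ t) = 0)
    (α K κ : ℝ) (hα : 1 ≤ α) (hK : 0 < K) (hκ : 0 < κ)
    (Cψ : ℝ → ℂ) (hCψ_cont : Continuous Cψ)
    (hCψ0 : 0 < (Cψ 0).re ∧ (Cψ 0).im = 0)
    (hCψ_bdd : ∀ l : ℝ, Norm.norm (Cψ l) ≤ K * Real.exp (-κ * |l|))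
    (hhat : ∀ l : ℝ, fhat ψ l = Cψ l * ((|l| ^ α : ℝ) : ℂ))
    (sigma2 : ℕ → ℝ)
    (hsigma2 : ∀ j : ℕ, sigma2 j =
      ∫ l : ℝ, f_G l * Norm.norm (fhat ψ ((2 : ℝ) ^ j * l)) ^ 2)
    (fc : ℕ → ℝ → ℂ)
    (hfc : ∀ j : ℕ, ∀ l : ℝ,
      fc j l = ((((Real.sqrt (sigma2 j))⁻¹ * f_G l : ℝ)) : ℂ) *
        (starRingEnd ℂ) (fhat ψ ((2 : ℝ) ^ j * l)))
    (j₂ : ℕ → ℕ)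
    (hj₂ : 1 < Filter.liminf (fun j : ℕ => (j₂ j : ℝ) / (j : ℝ)) atTop) :
    ∃ Cst > (0 : ℝ), ∃ J : ℕ, ∀ j ≥ J,
      Norm.norm
        (∫ l₁ : ℝ, ∫ l₂ : ℝ,
          ((Norm.norm (fhat ψ ((2 : ℝ) ^ (j₂ j) * l₂)) ^ 2 : ℝ) : ℂ) *
            fhat ψ ((2 : ℝ) ^ j * l₁) * fhat ψ ((2 : ℝ) ^ j * (l₁ - l₂)) *
            convC (fc j) (fc j) l₁ * convC (fc j) (fc j) (l₁ - l₂))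
      ≤ Cst * ((2 : ℝ) ^ ((j : ℝ) * (1 - 2 * β)) * (2 : ℝ) ^ (-(j₂ j : ℝ))) := by

  obtain ⟨hβ0, hβ1⟩ := hβ
  obtain ⟨M, hM⟩ := hCG_bdd
  have hM0 : 0 < M := lt_of_lt_of_le hCG0 (hM 0)
  set p : ℝ → ℂ := fhat ψ with hpdef
  have hp_cont : Continuous p := by
    have h : p = fun l => Cψ l * ((|l| ^ α : ℝ) : ℂ) := funext hhat
    rw [h]
    exact hCψ_cont.mul (Complex.continuous_ofReal.comp
      (continuous_abs.rpow_const (fun x => Or.inr (by linarith))))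
  -- pointwise exponential bound
  have hp_le : ∀ l : ℝ, ‖p l‖ ≤ K * (|l| ^ α * Real.exp (-κ * |l|)) := by
    intro l
    rw [hhat l, norm_mul, Complex.norm_real, Real.norm_eq_abs,
      abs_of_nonneg (Real.rpow_nonneg (abs_nonneg l) α)]
    calc ‖Cψ l‖ * |l| ^ α
        ≤ (K * Real.exp (-κ * |l|)) * |l| ^ α :=
          mul_le_mul_of_nonneg_right (hCψ_bdd l) (Real.rpow_nonneg (abs_nonneg l) α)
      _ = K * (|l| ^ α * Real.exp (-κ * |l|)) := by ring
  -- sup bound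
  obtain ⟨B, hB0, hB⟩ : ∃ B : ℝ, 0 < B ∧ ∀ l : ℝ, ‖p l‖ ≤ B := by
    have hev : ∀ᶠ x : ℝ in atTop, x ^ α * Real.exp (-κ * x) < 1 :=
      (tendsto_rpow_mul_exp_neg_mul_atTop_nhds_zero α κ hκ).eventually_lt_const one_pos
    obtain ⟨N, hN⟩ := eventually_atTop.mp hev
    set N' : ℝ := max N 0 with hN'def
    have hcont : ContinuousOn (fun x : ℝ => x ^ α * Real.exp (-κ * x)) (Set.Icc 0 N') :=
      ((continuous_id.rpow_const (fun x => Or.inr (by linarith))).mul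
        (Real.continuous_exp.comp (continuous_const.mul continuous_id))).continuousOn
    obtain ⟨C, hC⟩ := isCompact_Icc.exists_bound_of_continuousOn hcont
    refine ⟨K * max C 1, by positivity, fun l => ?_⟩
    refine (hp_le l).trans (mul_le_mul_of_nonneg_left ?_ hK.le)
    by_cases hl : |l| ≤ N'
    · have h := hC |l| ⟨abs_nonneg l, hl⟩
      rw [Real.norm_eq_abs] at h
      exact le_trans (le_abs_self _) (h.trans (le_max_left _ _))
    · have h : N ≤ |l| := le_trans (le_max_left _ _) (le_of_not_ge hl)
      exact (hN |l| h).le.trans (le_max_right _ _)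
  have hB' : ∀ l : ℝ, ‖p l‖ ≤ B := fun l => by
    exact hB l
  -- squaring identity
  have hsq : ∀ x c' : ℝ, (|x| ^ α * Real.exp (-c' * |x|)) ^ 2
      = |x| ^ (2*α) * Real.exp (-(2*c') * |x|) := by
    intro x c'
    rw [mul_pow, sq (Real.exp _), ← Real.exp_add, sq (|x| ^ α),
      ← Real.rpow_add' (abs_nonneg x) (by intro h; nlinarith)]
    ring_nf
  have hgin : ∀ s c : ℝ, -1 < s → 0 < c →
      Integrable (fun x : ℝ => |x| ^ s * Real.exp (-c * |x|)) := fun s c hs hc => gin19 hs hc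
  have hae : ∀ᵐ l : ℝ, l ≠ (0:ℝ) := by
    rw [ae_iff]
    simp [Real.volume_singleton]
  -- integrability and integral bounds for scaled |p|
  set E1 : ℝ := ∫ u : ℝ, |u| ^ α * Real.exp (-κ * |u|) with hE1def
  set E2 : ℝ := ∫ u : ℝ, |u| ^ (2*α) * Real.exp (-(2*κ) * |u|) with hE2def
  have hE1_0 : 0 ≤ E1 := integral_nonneg (fun u => by positivity)
  have hE2_0 : 0 ≤ E2 := integral_nonneg (fun u => by positivity)
  have hb1 : ∀ c : ℝ, ∀ l : ℝ, ‖p (c*l)‖ ≤ K * (|c*l| ^ α * Real.exp (-κ * |c*l|)) :=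
    fun c l => hp_le _
  have hb2 : ∀ c : ℝ, ∀ l : ℝ,
      ‖p (c*l)‖^2 ≤ K^2 * (|c*l| ^ (2*α) * Real.exp (-(2*κ) * |c*l|)) := by
    intro c l
    calc ‖p (c*l)‖^2 ≤ (K * (|c*l| ^ α * Real.exp (-κ * |c*l|)))^2 := by
          have := hp_le (c*l); nlinarith [norm_nonneg (p (c*l))]
      _ = K^2 * (|c*l| ^ (2*α) * Real.exp (-(2*κ) * |c*l|)) := by rw [mul_pow, hsq]
  have hqint1 : ∀ c : ℝ, 0 < c → Integrable (fun l : ℝ => ‖p (c * l)‖) := by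
    intro c hc
    have maj1 : Integrable (fun l : ℝ => K * (|c*l| ^ α * Real.exp (-κ * |c*l|))) :=
      ((hgin α κ (by linarith) hκ).comp_mul_left' hc.ne').const_mul _
    refine maj1.mono' ((hp_cont.comp
      (continuous_const.mul continuous_id)).norm.aestronglyMeasurable)
      (ae_of_all _ fun l => ?_)
    rw [Real.norm_eq_abs, abs_of_nonneg (norm_nonneg _)]; exact hb1 c l
  have hqint2 : ∀ c : ℝ, 0 < c → Integrable (fun l : ℝ => ‖p (c * l)‖ ^ 2) := by
    intro c hc
    have maj2 : Integrable (fun l : ℝ => K^2 * (|c*l| ^ (2*α) * Real.exp (-(2*κ) * |c*l|))) :=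
      ((hgin (2*α) (2*κ) (by linarith) (by linarith)).comp_mul_left' hc.ne').const_mul _
    refine maj2.mono' (((hp_cont.comp
      (continuous_const.mul continuous_id)).norm.pow 2).aestronglyMeasurable)
      (ae_of_all _ fun l => ?_)
    rw [Real.norm_eq_abs, abs_of_nonneg (by positivity)]; exact hb2 c l
  have hIb1 : ∀ c : ℝ, 0 < c → (∫ l : ℝ, ‖p (c * l)‖) ≤ K * (c⁻¹ * E1) := by
    intro c hc
    have maj1 : Integrable (fun l : ℝ => K * (|c*l| ^ α * Real.exp (-κ * |c*l|))) :=
      ((hgin α κ (by linarith) hκ).comp_mul_left' hc.ne').const_mul _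
    calc (∫ l : ℝ, ‖p (c * l)‖) ≤ ∫ l : ℝ, K * (|c*l| ^ α * Real.exp (-κ * |c*l|)) :=
        integral_mono_ae (hqint1 c hc) maj1 (ae_of_all _ (hb1 c))
      _ = K * (c⁻¹ * E1) := by
        rw [integral_const_mul,
          Measure.integral_comp_mul_left (fun u : ℝ => |u| ^ α * Real.exp (-κ * |u|)) c,
          abs_of_nonneg (inv_nonneg.mpr hc.le), smul_eq_mul]
  have hIb2 : ∀ c : ℝ, 0 < c → (∫ l : ℝ, ‖p (c * l)‖ ^ 2) ≤ K^2 * (c⁻¹ * E2) := by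
    intro c hc
    have maj2 : Integrable (fun l : ℝ => K^2 * (|c*l| ^ (2*α) * Real.exp (-(2*κ) * |c*l|))) :=
      ((hgin (2*α) (2*κ) (by linarith) (by linarith)).comp_mul_left' hc.ne').const_mul _
    calc (∫ l : ℝ, ‖p (c * l)‖^2)
        ≤ ∫ l : ℝ, K^2 * (|c*l| ^ (2*α) * Real.exp (-(2*κ) * |c*l|)) :=
        integral_mono_ae (hqint2 c hc) maj2 (ae_of_all _ (hb2 c))
      _ = K^2 * (c⁻¹ * E2) := by
        rw [integral_const_mul,
          Measure.integral_comp_mul_left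
            (fun u : ℝ => |u| ^ (2*α) * Real.exp (-(2*κ) * |u|)) c,
          abs_of_nonneg (inv_nonneg.mpr hc.le), smul_eq_mul]
  -- sigma lower bound
  obtain ⟨c₁, hc₁0, J, hσ⟩ : ∃ c₁ : ℝ, 0 < c₁ ∧ ∃ J : ℕ, ∀ j ≥ J,
      c₁ * ((2:ℝ) ^ j : ℝ) ^ (-β) ≤ sigma2 j := by
    have hev1 : ∀ᶠ x : ℝ in nhds 0, C_G 0 / 2 < C_G x :=
      (hCG_cont.continuousAt (x := 0)).eventually_const_lt (by linarith)
    obtain ⟨δ, hδ0, hδ⟩ := Metric.eventually_nhds_iff.mp hev1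
    set r : ℝ := ‖Cψ 0‖ with hrdef
    have hr0 : 0 < r := by
      have h1 : (Cψ 0).re ≤ |(Cψ 0).re| := le_abs_self _
      have h2 := Complex.abs_re_le_norm (Cψ 0)
      calc (0:ℝ) < (Cψ 0).re := hCψ0.1
        _ ≤ r := le_trans h1 h2
    have hev2 : ∀ᶠ x : ℝ in nhds 0, r / 2 < ‖Cψ x‖ :=
      ((continuous_norm.comp hCψ_cont).continuousAt (x := 0)).eventually_const_lt
        (by simp only [Function.comp_apply]; linarith)
    obtain ⟨ε, hε0, hε⟩ := Metric.eventually_nhds_iff.mp hev2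
    obtain ⟨J, hJ⟩ := pow_unbounded_of_one_lt (ε / δ) (one_lt_two (α := ℝ))
    set q : ℝ := β - 1 + 2*α with hqdef
    have hq1 : -1 < q := by simp only [hqdef]; linarith
    have hq0 : 0 < q + 1 := by linarith
    refine ⟨C_G 0 / 2 * (r / 2) ^ 2 * ((ε/2) ^ (β + 2*α) / (β + 2*α)), by positivity, J,
      fun j hj => ?_⟩
    set a : ℝ := (2:ℝ) ^ j with hadef
    have ha : 0 < a := by positivity
    have haJ : (ε / δ) < a := lt_of_lt_of_le hJ (by
      simp only [hadef]
      exact pow_le_pow_right₀ (by norm_num) hj)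
    set T : ℝ := ε / (2 * a) with hTdef
    have hT0 : 0 < T := by positivity
    have hTδ : T < δ := by
      rw [hTdef, div_lt_iff₀ (by positivity)]
      rw [div_lt_iff₀ hδ0] at haJ
      nlinarith
    set F : ℝ → ℝ := fun l => f_G l * ‖p (a * l)‖ ^ 2 with hFdef
    have hF_nonneg : ∀ l, 0 ≤ F l := fun l => mul_nonneg (hfG_nonneg l) (by positivity)
    have hFb : ∀ l : ℝ, l ≠ 0 → F l ≤
        (M * K^2 * a ^ ((1:ℝ)-β)) * (|a*l| ^ q * Real.exp (-(2*κ) * |a*l|)) := by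
      intro l hl
      have hab : |a * l| = a * |l| := by rw [abs_mul, abs_of_pos ha]
      have h1 : f_G l ≤ M * |l| ^ (β-1) :=
        (hfG l hl).le.trans (mul_le_mul_of_nonneg_right (hM l)
          (Real.rpow_nonneg (abs_nonneg l) _))
      have h2 : ‖p (a*l)‖ ^ 2
          ≤ K^2 * (|a*l| ^ (2*α) * Real.exp (-(2*κ) * |a*l|)) := by
        have hb := hb2 a l
        exact hb
      have hl0 : 0 < |l| := abs_pos.mpr hl
      have hal0 : 0 < |a * l| := by rw [hab]; positivity
      calc F l ≤ (M * |l| ^ (β-1)) * (K^2 * (|a*l| ^ (2*α) * Real.exp (-(2*κ) * |a*l|))) :=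
          mul_le_mul h1 h2 (by positivity) (by positivity)
        _ = (M * K^2 * a ^ ((1:ℝ)-β)) * (|a*l| ^ q * Real.exp (-(2*κ) * |a*l|)) := by
          have e1 : |l| ^ (β-1) = a ^ ((1:ℝ)-β) * |a*l| ^ (β-1) := by
            rw [hab, Real.mul_rpow ha.le (abs_nonneg l), ← mul_assoc,
              ← Real.rpow_add ha]
            norm_num
          have e2 : |a*l| ^ (β-1) * |a*l| ^ (2*α) = |a*l| ^ q := by
            rw [← Real.rpow_add hal0, hqdef]
          rw [e1]
          calc M * (a ^ ((1:ℝ)-β) * |a*l| ^ (β-1))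
                * (K^2 * (|a*l| ^ (2*α) * Real.exp (-(2*κ) * |a*l|)))
              = (M * K^2 * a ^ ((1:ℝ)-β)) *
                ((|a*l| ^ (β-1) * |a*l| ^ (2*α)) * Real.exp (-(2*κ) * |a*l|)) := by ring
            _ = _ := by rw [e2]
    have hF_meas : AEStronglyMeasurable F volume :=
      hfG_int.aestronglyMeasurable.mul (((continuous_norm.comp
        (hp_cont.comp (continuous_const.mul continuous_id))).pow 2).aestronglyMeasurable)
    have hF_int : Integrable F := by
      have maj : Integrable (fun l : ℝ =>
          (M * K^2 * a ^ ((1:ℝ)-β)) * (|a*l| ^ q * Real.exp (-(2*κ) * |a*l|))) :=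
        ((hgin q (2*κ) hq1 (by linarith)).comp_mul_left' ha.ne').const_mul _
      refine maj.mono' hF_meas ?_
      filter_upwards [hae] with l hl
      rw [Real.norm_eq_abs, abs_of_nonneg (hF_nonneg l)]
      exact hFb l hl
    set L : ℝ → ℝ := fun l => (C_G 0 / 2 * (r/2)^2 * a ^ (2*α)) * l ^ q with hLdef
    have hL_int : IntegrableOn L (Set.Ioc 0 T) := by
      have h := (intervalIntegral.intervalIntegrable_rpow' (a := 0) (b := T) hq1).1
      exact h.const_mul _
    have hLF : ∀ l ∈ Set.Ioc 0 T, L l ≤ F l := by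
      intro l hl
      obtain ⟨hl0, hlT⟩ := hl
      have hlδ : C_G 0 / 2 < C_G l := hδ (by
        rw [Real.dist_eq, sub_zero, abs_of_pos hl0]; linarith)
      have halε : r / 2 < ‖Cψ (a * l)‖ := hε (by
        rw [Real.dist_eq, sub_zero, abs_of_pos (by positivity : (0:ℝ) < a * l)]
        rw [hTdef, le_div_iff₀ (by positivity)] at hlT
        nlinarith)
      have e5 : ((a*l) ^ α)^(2:ℕ) = (a*l) ^ (2*α) := by
        rw [← Real.rpow_natCast ((a*l)^α) 2, ← Real.rpow_mul (by positivity : (0:ℝ) ≤ a*l)]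
        norm_num [mul_comm]
      have hFl : F l = C_G l * l ^ (β-1) * (‖Cψ (a*l)‖^2 * (a*l) ^ (2*α)) := by
        rw [hFdef]
        simp only
        rw [hfG l hl0.ne', hhat (a*l), norm_mul, Complex.norm_real, Real.norm_eq_abs,
          abs_of_nonneg (Real.rpow_nonneg (abs_nonneg _) α),
          abs_of_pos hl0, abs_of_pos (by positivity : (0:ℝ) < a * l), mul_pow, e5]
      rw [hFl, hLdef]
      simp only
      have e3 : (a*l) ^ (2*α) = a ^ (2*α) * l ^ (2*α) := Real.mul_rpow ha.le hl0.le
      have e4 : l ^ (β-1) * l ^ (2*α) = l ^ q := by rw [← Real.rpow_add hl0, hqdef]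
      calc C_G 0 / 2 * (r/2)^2 * a ^ (2*α) * l ^ q
          = (C_G 0 / 2) * (l ^ (β-1) * l ^ (2*α)) * ((r/2)^2 * a ^ (2*α)) := by rw [e4]; ring
        _ ≤ C_G l * (l ^ (β-1) * l ^ (2*α)) * (‖Cψ (a*l)‖^2 * a ^ (2*α)) := by
          have hr2 : (r/2)^2 ≤ ‖Cψ (a*l)‖^2 := by nlinarith [halε, hr0]
          have hnn1 : (0:ℝ) ≤ l ^ (β-1) * l ^ (2*α) := by positivity
          have hnn2 : (0:ℝ) ≤ a ^ (2*α) := by positivity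
          refine mul_le_mul ?_ ?_ (by positivity) ?_
          · exact mul_le_mul_of_nonneg_right hlδ.le hnn1
          · exact mul_le_mul_of_nonneg_right hr2 hnn2
          · exact mul_nonneg (hCG_nonneg l) hnn1
        _ = C_G l * l ^ (β-1) * (‖Cψ (a*l)‖^2 * (a*l) ^ (2*α)) := by
          rw [e3]; ring
    have step1 : ∫ l in Set.Ioc 0 T, L l ≤ ∫ l in Set.Ioc 0 T, F l :=
      setIntegral_mono_on hL_int hF_int.integrableOn measurableSet_Ioc hLF
    have step2 : ∫ l in Set.Ioc 0 T, F l ≤ sigma2 j := by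
      rw [hsigma2 j]
      exact setIntegral_le_integral hF_int (ae_of_all _ hF_nonneg)
    have hLval : ∫ l in Set.Ioc 0 T, L l
        = (C_G 0 / 2 * (r/2)^2 * a ^ (2*α)) * (T ^ (q+1) / (q+1)) := by
      rw [← intervalIntegral.integral_of_le hT0.le, intervalIntegral.integral_const_mul,
        integral_rpow (Or.inl hq1), Real.zero_rpow hq0.ne']
      ring
    have hfinal : C_G 0 / 2 * (r/2)^2 * ((ε/2) ^ (β + 2*α) / (β + 2*α)) * a ^ (-β)
        = (C_G 0 / 2 * (r/2)^2 * a ^ (2*α)) * (T ^ (q+1) / (q+1)) := by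
      have hq1' : q + 1 = β + 2*α := by rw [hqdef]; ring
      have hTe : T ^ (q+1) = (ε/2) ^ (β+2*α) * a ^ (-(β+2*α)) := by
        rw [hq1', hTdef]
        rw [show ε / (2*a) = (ε/2) * a⁻¹ by ring,
          Real.mul_rpow (by positivity) (by positivity),
          Real.inv_rpow ha.le, ← Real.rpow_neg ha.le]
      rw [hTe, hq1']
      have e6 : a ^ (2*α) * a ^ (-(β+2*α)) = a ^ (-β) := by
        rw [← Real.rpow_add ha]; ring_nf
      calc C_G 0 / 2 * (r/2)^2 * ((ε/2) ^ (β + 2*α) / (β + 2*α)) * a ^ (-β)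
          = C_G 0 / 2 * (r/2)^2 * ((ε/2) ^ (β + 2*α) / (β + 2*α)) *
            (a ^ (2*α) * a ^ (-(β+2*α))) := by rw [e6]
        _ = _ := by ring
    calc C_G 0 / 2 * (r/2)^2 * ((ε/2) ^ (β + 2*α) / (β + 2*α)) * a ^ (-β)
        = ∫ l in Set.Ioc 0 T, L l := by rw [hfinal, hLval]
      _ ≤ ∫ l in Set.Ioc 0 T, F l := step1
      _ ≤ sigma2 j := step2
  -- main part
  set s2 : ℝ := 2*α + 2*β - 2 with hs2def
  have hs2 : -1 < s2 := by simp only [hs2def]; linarith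
  set Es : ℝ := ∫ u : ℝ, |u| ^ s2 * Real.exp (-(2*κ) * |u|) with hEsdef
  have hEs_0 : 0 ≤ Es := integral_nonneg (fun u => by positivity)
  set D : ℝ := c₁⁻¹ * (M^2 * K^2) * Es with hDdef
  have hD0 : 0 ≤ D := by positivity
  set Cst : ℝ := K^2 * E2 * (B * (D * D)) * (K * E1) + 1 with hCstdef
  have hCst0 : 0 < Cst := by positivity
  refine ⟨Cst, hCst0, J, fun j hj => ?_⟩
  set a : ℝ := (2:ℝ) ^ j with hadef
  set a2 : ℝ := (2:ℝ) ^ (j₂ j) with ha2def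
  have ha : 0 < a := by positivity
  have ha2 : 0 < a2 := by positivity
  have hσj : 0 < sigma2 j := lt_of_lt_of_le (by positivity) (hσ j hj)
  -- fc norm and measurability
  have hfc_norm : ∀ l : ℝ, ‖fc j l‖
      = (Real.sqrt (sigma2 j))⁻¹ * f_G l * ‖p (a * l)‖ := by
    intro l
    rw [hfc j l, norm_mul, Complex.norm_real, RCLike.norm_conj, Real.norm_eq_abs,
      abs_of_nonneg (mul_nonneg (inv_nonneg.mpr (Real.sqrt_nonneg _)) (hfG_nonneg l))]
  have hfc_meas : AEStronglyMeasurable (fc j) volume := by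
    have h : fc j = fun l => ((((Real.sqrt (sigma2 j))⁻¹ * f_G l : ℝ)) : ℂ) *
        (starRingEnd ℂ) (p ((2 : ℝ) ^ j * l)) := funext (hfc j)
    rw [h]
    exact (Complex.continuous_ofReal.comp_aestronglyMeasurable
      (hfG_int.aestronglyMeasurable.const_mul _)).mul
      ((continuous_star.comp (hp_cont.comp
        (continuous_const.mul continuous_id))).aestronglyMeasurable)
  have hss : ((Real.sqrt (sigma2 j))⁻¹)^2 = (sigma2 j)⁻¹ := by
    rw [← Real.sqrt_inv, Real.sq_sqrt (inv_nonneg.mpr hσj.le)]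
  -- pointwise L² bound for fc
  have hfcb : ∀ l : ℝ, l ≠ 0 → ‖fc j l‖^2 ≤
      ((sigma2 j)⁻¹ * (M^2 * K^2) * a ^ ((2:ℝ)-2*β)) *
        (|a*l| ^ s2 * Real.exp (-(2*κ) * |a*l|)) := by
    intro l hl
    have hl0 : 0 < |l| := abs_pos.mpr hl
    have hab : |a * l| = a * |l| := by rw [abs_mul, abs_of_pos ha]
    have hal0 : 0 < |a * l| := by rw [hab]; positivity
    have h1 : f_G l ≤ M * |l| ^ (β-1) :=
      (hfG l hl).le.trans (mul_le_mul_of_nonneg_right (hM l)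
        (Real.rpow_nonneg (abs_nonneg l) _))
    have h2 := hb2 a l
    have e7 : (|l| ^ (β-1))^(2:ℕ) = |l| ^ (2*β-2) := by
      rw [← Real.rpow_natCast (|l| ^ (β-1)) 2, ← Real.rpow_mul (abs_nonneg l)]
      norm_num
      ring_nf
    have e8 : |l| ^ (2*β-2) = a ^ ((2:ℝ)-2*β) * |a*l| ^ (2*β-2) := by
      rw [hab, Real.mul_rpow ha.le (abs_nonneg l), ← mul_assoc, ← Real.rpow_add ha]
      norm_num
    have e9 : |a*l| ^ (2*β-2) * |a*l| ^ (2*α) = |a*l| ^ s2 := by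
      rw [← Real.rpow_add hal0, hs2def]
      ring_nf
    calc ‖fc j l‖^2 = ((Real.sqrt (sigma2 j))⁻¹)^2 * (f_G l)^2 * ‖p (a*l)‖^2 := by
          rw [hfc_norm l]; ring
      _ ≤ (sigma2 j)⁻¹ * (M * |l| ^ (β-1))^2 *
          (K^2 * (|a*l| ^ (2*α) * Real.exp (-(2*κ) * |a*l|))) := by
          rw [hss]
          refine mul_le_mul (mul_le_mul_of_nonneg_left ?_ (inv_nonneg.mpr hσj.le)) h2
            (by positivity) (by positivity)
          exact pow_le_pow_left₀ (hfG_nonneg l) h1 2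
      _ = ((sigma2 j)⁻¹ * (M^2 * K^2) * a ^ ((2:ℝ)-2*β)) *
          (|a*l| ^ s2 * Real.exp (-(2*κ) * |a*l|)) := by
          rw [mul_pow, e7, e8, ← e9]; ring
  have hfc2_int : Integrable (fun l : ℝ => ‖fc j l‖ ^ 2) := by
    have maj : Integrable (fun l : ℝ =>
        ((sigma2 j)⁻¹ * (M^2 * K^2) * a ^ ((2:ℝ)-2*β)) *
          (|a*l| ^ s2 * Real.exp (-(2*κ) * |a*l|))) :=
      ((hgin s2 (2*κ) hs2 (by linarith)).comp_mul_left' ha.ne').const_mul _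
    refine maj.mono' (hfc_meas.norm.pow 2) ?_
    filter_upwards [hae] with l hl
    rw [Real.norm_eq_abs, abs_of_nonneg (by positivity)]
    exact hfcb l hl
  set Q : ℝ := ∫ l : ℝ, ‖fc j l‖ ^ 2 with hQdef
  have hQ0 : 0 ≤ Q := integral_nonneg (fun l => by positivity)
  have hQ_le : Q ≤ D * a ^ ((1:ℝ) - β) := by
    have maj : Integrable (fun l : ℝ =>
        ((sigma2 j)⁻¹ * (M^2 * K^2) * a ^ ((2:ℝ)-2*β)) *
          (|a*l| ^ s2 * Real.exp (-(2*κ) * |a*l|))) :=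
      ((hgin s2 (2*κ) hs2 (by linarith)).comp_mul_left' ha.ne').const_mul _
    have step1 : Q ≤ ((sigma2 j)⁻¹ * (M^2 * K^2) * a ^ ((2:ℝ)-2*β)) * (a⁻¹ * Es) := by
      calc Q ≤ ∫ l : ℝ, ((sigma2 j)⁻¹ * (M^2 * K^2) * a ^ ((2:ℝ)-2*β)) *
            (|a*l| ^ s2 * Real.exp (-(2*κ) * |a*l|)) := by
            refine integral_mono_ae hfc2_int maj ?_
            filter_upwards [hae] with l hl
            exact hfcb l hl
        _ = ((sigma2 j)⁻¹ * (M^2 * K^2) * a ^ ((2:ℝ)-2*β)) * (a⁻¹ * Es) := by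
            rw [integral_const_mul,
              Measure.integral_comp_mul_left
                (fun u : ℝ => |u| ^ s2 * Real.exp (-(2*κ) * |u|)) a,
              abs_of_nonneg (inv_nonneg.mpr ha.le), smul_eq_mul]
    have hinv : (sigma2 j)⁻¹ ≤ c₁⁻¹ * a ^ β := by
      have h := hσ j hj
      have h2 : (sigma2 j)⁻¹ ≤ (c₁ * a ^ (-β))⁻¹ :=
        inv_anti₀ (by positivity) h
      rwa [mul_inv, ← Real.rpow_neg ha.le, neg_neg] at h2
    calc Q ≤ ((sigma2 j)⁻¹ * (M^2 * K^2) * a ^ ((2:ℝ)-2*β)) * (a⁻¹ * Es) := step1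
      _ ≤ ((c₁⁻¹ * a ^ β) * (M^2 * K^2) * a ^ ((2:ℝ)-2*β)) * (a⁻¹ * Es) := by
          refine mul_le_mul_of_nonneg_right (mul_le_mul_of_nonneg_right
            (mul_le_mul_of_nonneg_right hinv (by positivity)) (by positivity)) ?_
          positivity
      _ = D * (a ^ β * a ^ ((2:ℝ)-2*β) * a ^ (-1:ℝ)) := by
          rw [Real.rpow_neg_one a, hDdef]; ring
      _ = D * a ^ ((1:ℝ) - β) := by
          have epow : a ^ β * a ^ ((2:ℝ)-2*β) * a ^ (-1:ℝ) = a ^ ((1:ℝ) - β) := by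
            rw [← Real.rpow_add ha, ← Real.rpow_add ha]
            congr 1
            ring
          rw [epow]
  -- convolution bound
  have hconv : ∀ x : ℝ, ‖convC (fc j) (fc j) x‖ ≤ Q := by
    intro x
    rw [convC]
    calc ‖∫ y : ℝ, fc j (x - y) * fc j y‖ ≤ ∫ y : ℝ, ‖fc j (x - y) * fc j y‖ :=
        norm_integral_le_integral_norm _
      _ ≤ ∫ y : ℝ, (‖fc j (x - y)‖^2 + ‖fc j y‖^2)/2 := by
          refine integral_mono_of_nonneg (ae_of_all _ fun y => norm_nonneg _)
            (((hfc2_int.comp_sub_left x).add hfc2_int).div_const 2)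
            (ae_of_all _ fun y => ?_)
          simp only [norm_mul]
          nlinarith [norm_nonneg (fc j (x - y)), norm_nonneg (fc j y),
            sq_nonneg (‖fc j (x - y)‖ - ‖fc j y‖)]
      _ = Q := by
          rw [integral_div, integral_add (hfc2_int.comp_sub_left x) hfc2_int,
            integral_sub_left_eq_self (fun t : ℝ => ‖fc j t‖^2) volume x]
          simp only [hQdef]
          ring
  have hconv' : ∀ x : ℝ, ‖convC (fc j) (fc j) x‖ ≤ Q := fun x => by
    exact hconv x
  -- main chain
  set I1 : ℝ := ∫ l : ℝ, ‖p (a * l)‖ with hI1def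
  set I2 : ℝ := ∫ l : ℝ, ‖p (a2 * l)‖ ^ 2 with hI2def
  have hI1_0 : 0 ≤ I1 := integral_nonneg (fun l => norm_nonneg _)
  have hI2_0 : 0 ≤ I2 := integral_nonneg (fun l => by positivity)
  set cv : ℝ → ℂ := convC (fc j) (fc j) with hcvdef
  set F : ℝ → ℝ → ℂ := fun l₁ l₂ =>
    ((‖p (a2 * l₂)‖ ^ 2 : ℝ) : ℂ) * p (a * l₁) * p (a * (l₁ - l₂)) *
      cv l₁ * cv (l₁ - l₂) with hFdef
  have hnormF : ∀ l₁ l₂ : ℝ, ‖F l₁ l₂‖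
      = ‖p (a2*l₂)‖^2 * ‖p (a*l₁)‖ * ‖p (a*(l₁-l₂))‖ * ‖cv l₁‖ * ‖cv (l₁-l₂)‖ := by
    intro l₁ l₂
    rw [hFdef]
    simp only [norm_mul, Complex.norm_real, Real.norm_eq_abs]
    rw [abs_of_nonneg (by positivity : (0:ℝ) ≤ ‖p (a2*l₂)‖^2)]
  have hFb : ∀ l₁ l₂ : ℝ, ‖F l₁ l₂‖
      ≤ ‖p (a2*l₂)‖^2 * (B * (Q * Q) * ‖p (a*l₁)‖) := by
    intro l₁ l₂
    rw [hnormF l₁ l₂]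
    have hX : (0:ℝ) ≤ ‖p (a2*l₂)‖^2 * ‖p (a*l₁)‖ := by positivity
    calc ‖p (a2*l₂)‖^2 * ‖p (a*l₁)‖ * ‖p (a*(l₁-l₂))‖ * ‖cv l₁‖ * ‖cv (l₁-l₂)‖
        ≤ ‖p (a2*l₂)‖^2 * ‖p (a*l₁)‖ * B * ‖cv l₁‖ * ‖cv (l₁-l₂)‖ := by
          refine mul_le_mul_of_nonneg_right (mul_le_mul_of_nonneg_right ?_ (norm_nonneg _))
            (norm_nonneg _)
          exact mul_le_mul_of_nonneg_left (hB _) hX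
      _ ≤ ‖p (a2*l₂)‖^2 * ‖p (a*l₁)‖ * B * Q * ‖cv (l₁-l₂)‖ := by
          refine mul_le_mul_of_nonneg_right ?_ (norm_nonneg _)
          exact mul_le_mul_of_nonneg_left (hconv _) (mul_nonneg hX hB0.le)
      _ ≤ ‖p (a2*l₂)‖^2 * ‖p (a*l₁)‖ * B * Q * Q :=
          mul_le_mul_of_nonneg_left (hconv _)
            (mul_nonneg (mul_nonneg hX hB0.le) hQ0)
      _ = ‖p (a2*l₂)‖^2 * (B * (Q * Q) * ‖p (a*l₁)‖) := by ring
  have hinner : ∀ l₁ : ℝ, ‖∫ l₂ : ℝ, F l₁ l₂‖ ≤ (I2 * (B * (Q * Q))) * ‖p (a*l₁)‖ := by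
    intro l₁
    calc ‖∫ l₂ : ℝ, F l₁ l₂‖ ≤ ∫ l₂ : ℝ, ‖F l₁ l₂‖ := norm_integral_le_integral_norm _
      _ ≤ ∫ l₂ : ℝ, ‖p (a2*l₂)‖^2 * (B * (Q * Q) * ‖p (a*l₁)‖) :=
          integral_mono_of_nonneg (ae_of_all _ fun l₂ => norm_nonneg _)
            ((hqint2 a2 ha2).mul_const _) (ae_of_all _ (hFb l₁))
      _ = I2 * (B * (Q * Q) * ‖p (a*l₁)‖) := by rw [integral_mul_const]
      _ = (I2 * (B * (Q * Q))) * ‖p (a*l₁)‖ := by ring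
  have houter : ‖∫ l₁ : ℝ, ∫ l₂ : ℝ, F l₁ l₂‖ ≤ (I2 * (B * (Q * Q))) * I1 := by
    calc ‖∫ l₁ : ℝ, ∫ l₂ : ℝ, F l₁ l₂‖ ≤ ∫ l₁ : ℝ, ‖∫ l₂ : ℝ, F l₁ l₂‖ :=
        norm_integral_le_integral_norm _
      _ ≤ ∫ l₁ : ℝ, (I2 * (B * (Q * Q))) * ‖p (a*l₁)‖ :=
          integral_mono_of_nonneg (ae_of_all _ fun l₁ => norm_nonneg _)
            ((hqint1 a ha).const_mul _) (ae_of_all _ hinner)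
      _ = (I2 * (B * (Q * Q))) * I1 := by rw [integral_const_mul]
  -- numeric conclusion
  have hcore : (I2 * (B * (Q * Q))) * I1 ≤
      ((K^2 * (a2⁻¹ * E2)) * (B * ((D * a ^ ((1:ℝ)-β)) * (D * a ^ ((1:ℝ)-β))))) *
        (K * (a⁻¹ * E1)) := by
    have h1 := hIb2 a2 ha2
    have h2 := hIb1 a ha
    have hR0 : (0:ℝ) ≤ D * a ^ ((1:ℝ)-β) := mul_nonneg hD0 (Real.rpow_nonneg ha.le _)
    have hKE0 : (0:ℝ) ≤ K^2 * (a2⁻¹ * E2) :=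
      mul_nonneg (by positivity) (mul_nonneg (by positivity) hE2_0)
    have stepA : B * (Q * Q) ≤ B * ((D * a ^ ((1:ℝ)-β)) * (D * a ^ ((1:ℝ)-β))) :=
      mul_le_mul_of_nonneg_left (mul_le_mul hQ_le hQ_le hQ0 hR0) hB0.le
    have stepB : I2 * (B * (Q * Q)) ≤
        (K^2 * (a2⁻¹ * E2)) * (B * ((D * a ^ ((1:ℝ)-β)) * (D * a ^ ((1:ℝ)-β)))) :=
      mul_le_mul h1 stepA (mul_nonneg hB0.le (mul_nonneg hQ0 hQ0)) hKE0
    exact mul_le_mul stepB h2 hI1_0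
      (mul_nonneg hKE0 (mul_nonneg hB0.le (mul_nonneg hR0 hR0)))
  have hpow : a ^ ((1:ℝ)-β) * a ^ ((1:ℝ)-β) * a⁻¹ * a2⁻¹ =
      (2:ℝ) ^ ((j:ℝ) * (1 - 2*β)) * (2:ℝ) ^ (-(j₂ j : ℝ)) := by
    have ea : a = (2:ℝ) ^ ((j:ℝ)) := by
      rw [hadef, Real.rpow_natCast]
    have ea2 : a2 = (2:ℝ) ^ ((j₂ j : ℝ)) := by
      rw [ha2def, Real.rpow_natCast]
    rw [ea, ea2, ← Real.rpow_neg (by norm_num : (0:ℝ) ≤ 2),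
      ← Real.rpow_neg (by norm_num : (0:ℝ) ≤ 2),
      ← Real.rpow_mul (by norm_num : (0:ℝ) ≤ 2),
      ← Real.rpow_add (by norm_num : (0:ℝ) < 2),
      ← Real.rpow_add (by norm_num : (0:ℝ) < 2)]
    congr 1
    ring
  calc ‖∫ l₁ : ℝ, ∫ l₂ : ℝ, F l₁ l₂‖
      = ‖∫ l₁ : ℝ, ∫ l₂ : ℝ, F l₁ l₂‖ := rfl
    _ ≤ (I2 * (B * (Q * Q))) * I1 := houter
    _ ≤ ((K^2 * (a2⁻¹ * E2)) * (B * ((D * a ^ ((1:ℝ)-β)) * (D * a ^ ((1:ℝ)-β))))) *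
        (K * (a⁻¹ * E1)) := hcore
    _ = (K^2 * E2 * (B * (D * D)) * (K * E1)) *
        (a ^ ((1:ℝ)-β) * a ^ ((1:ℝ)-β) * a⁻¹ * a2⁻¹) := by ring
    _ = (K^2 * E2 * (B * (D * D)) * (K * E1)) *
        ((2:ℝ) ^ ((j:ℝ) * (1 - 2*β)) * (2:ℝ) ^ (-(j₂ j : ℝ))) := by rw [hpow]
    _ ≤ Cst * ((2:ℝ) ^ ((j:ℝ) * (1 - 2*β)) * (2:ℝ) ^ (-(j₂ j : ℝ))) := by
        refine mul_le_mul_of_nonneg_right ?_ (by positivity)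
        rw [hCstdef]
        linarith
end
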